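/- arXiv:1511.08403 — 6 statements merged into one kernel-verified Lean document; each statement's English description precedes it below -/
import Mathlib

section
/- If G is a minimal forbidden induced subgraph for the class Υ_k (i.e., G ∉ Υ_k but every proper induced subgraph of G is in Υ_k), then G has a dominating vertex. -/
open SimpleGraph

attribute [local instance] Classical.propDecidable

set_option linter.unnecessarySeqFocus false

/-- `G ∈ Υ_k`: every nonempty induced subgraph `H` satisfies `Δ(H) + 1 ≤ χ(H) + k`,
i.e. `Δ(H) ≤ χ(H) + k - 1`. -/
def UpsilonMem (k : ℕ) {V : Type*} [Fintype V] (G : SimpleGraph V) : Prop :=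
  ∀ s : Finset V, s.Nonempty →
    ((G.induce (s : Set V)).maxDegree + 1 : ℕ∞) ≤
      (G.induce (s : Set V)).chromaticNumber + (k : ℕ∞)

/-- `G ∈ Ω_k`: every nonempty induced subgraph `H` satisfies `Δ(H) + 1 ≤ ω(H) + k`. -/
def OmegaMem (k : ℕ) {V : Type*} [Fintype V] (G : SimpleGraph V) : Prop :=
  ∀ s : Finset V, s.Nonempty →
    (G.induce (s : Set V)).maxDegree + 1 ≤ (G.induce (s : Set V)).cliqueNum + k

/-- `G` is a minimal forbidden induced subgraph for `Υ_k`. -/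
def MinForbUpsilon (k : ℕ) {V : Type*} [Fintype V] (G : SimpleGraph V) : Prop :=
  ¬ UpsilonMem k G ∧
    ∀ s : Finset V, s ≠ Finset.univ → UpsilonMem k (G.induce (s : Set V))

/-- `G` is a minimal forbidden induced subgraph for `Ω_k`. -/
def MinForbOmega (k : ℕ) {V : Type*} [Fintype V] (G : SimpleGraph V) : Prop :=
  ¬ OmegaMem k G ∧
    ∀ s : Finset V, s ≠ Finset.univ → OmegaMem k (G.induce (s : Set V))

/-- `v` is a dominating vertex of `G`. -/
def IsDominatingVertex {V : Type*} (G : SimpleGraph V) (v : V) : Prop :=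
  ∀ w, w ≠ v → G.Adj v w

/-- In every optimal proper coloring of `G`, every used color class has at least 2 vertices. -/
def AllColorClassesBig {V : Type*} [Fintype V] (G : SimpleGraph V) : Prop :=
  ∀ (n : ℕ) (C : G.Coloring (Fin n)), (n : ℕ∞) = G.chromaticNumber →
    ∀ c : Fin n, (∃ u, C u = c) → 2 ≤ Fintype.card {u // C u = c}

/-- `G` is a perfect graph: clique number equals chromatic number for every induced subgraph. -/
def IsPerfect {V : Type*} [Fintype V] (G : SimpleGraph V) : Prop :=
  ∀ s : Finset V,
    (((G.induce (s : Set V)).cliqueNum : ℕ∞)) = (G.induce (s : Set V)).chromaticNumber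

/-- Add a dominating vertex to `G`. -/
def cone {V : Type*} (G : SimpleGraph V) : SimpleGraph (Option V) where
  Adj a b := match a, b with
    | some a, some b => G.Adj a b
    | some _, none => True
    | none, some _ => True
    | none, none => False
  symm := ⟨by rintro (_|a) (_|b) h <;> simp_all <;> exact h.symm⟩
  loopless := ⟨by rintro (_|a) h <;> simp_all⟩

/-- The claw `K_{1,3}`. -/
def claw : SimpleGraph (Fin 1 ⊕ Fin 3) := completeBipartiteGraph (Fin 1) (Fin 3)

/-- The gem: `P₄` plus a dominating vertex. -/
def gem : SimpleGraph (Option (Fin 4)) := cone (pathGraph 4)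

/-- The wheel `W₄`: `C₄` plus a dominating vertex. -/
def wheel4 : SimpleGraph (Option (Fin 4)) := cone (cycleGraph 4)

/-- The butterfly: two triangles sharing exactly one vertex. -/
def butterfly : SimpleGraph (Fin 5) :=
  SimpleGraph.fromRel (fun a b =>
    (a, b) ∈ [((0:Fin 5), (1:Fin 5)), (0,2), (1,2), (0,3), (0,4), (3,4)])

/-- `G` is a disjoint union of complete graphs. -/
def IsUnionOfCliques {V : Type*} (G : SimpleGraph V) : Prop :=
  ∀ a b c, G.Adj a b → G.Adj b c → a ≠ c → G.Adj a c

/-- `G` is neighborhood perfect: the neighborhood of every vertex induces a perfect graph. -/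
def NbhdPerfect {V : Type*} [Fintype V] (G : SimpleGraph V) : Prop :=
  ∀ v : V, IsPerfect (G.induce (G.neighborSet v))

private lemma degree_eq_of_iso' {V W : Type*} [Fintype V] [Fintype W] {G : SimpleGraph V}
    {G' : SimpleGraph W} [DecidableRel G.Adj] [DecidableRel G'.Adj] (f : G ≃g G') (v : V) :
    G'.degree (f v) = G.degree v := by
  rw [← card_neighborSet_eq_degree, ← card_neighborSet_eq_degree]
  exact Fintype.card_congr (f.mapNeighborSet v).symm

private lemma maxDegree_eq_of_iso' {V W : Type*} [Fintype V] [Fintype W] {G : SimpleGraph V}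
    {G' : SimpleGraph W} [DecidableRel G.Adj] [DecidableRel G'.Adj] (f : G ≃g G') :
    G.maxDegree = G'.maxDegree := by
  cases isEmpty_or_nonempty V with
  | inl hV =>
    have hW : IsEmpty W := f.toEquiv.symm.isEmpty
    simp [SimpleGraph.maxDegree, Finset.univ_eq_empty]
  | inr hV =>
    have hW : Nonempty W := f.symm.toEquiv.nonempty
    apply le_antisymm
    · obtain ⟨v, hv⟩ := G.exists_maximal_degree_vertex
      rw [hv, ← degree_eq_of_iso' f v]
      exact G'.degree_le_maxDegree _
    · obtain ⟨w, hw⟩ := G'.exists_maximal_degree_vertex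
      rw [hw, ← degree_eq_of_iso' f.symm w]
      exact G.degree_le_maxDegree _

private lemma chromaticNumber_eq_of_iso' {V W : Type*} {G : SimpleGraph V}
    {G' : SimpleGraph W} (f : G ≃g G') :
    G.chromaticNumber = G'.chromaticNumber :=
  le_antisymm (chromaticNumber_mono_of_hom f.toEmbedding.toHom)
    (chromaticNumber_mono_of_hom f.symm.toEmbedding.toHom)

private lemma upsilon_self' (k : ℕ) {W : Type*} [Fintype W] [Nonempty W] (G' : SimpleGraph W)
    (h : UpsilonMem k G') :
    ((G'.maxDegree + 1 : ℕ∞)) ≤ G'.chromaticNumber + (k : ℕ∞) := by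
  have h1 := h Finset.univ Finset.univ_nonempty
  have e : G'.induce ((Finset.univ : Finset W) : Set W) ≃g G' :=
    { toEquiv := Equiv.subtypeUnivEquiv (by simp)
      map_rel_iff' := Iff.rfl }
  rwa [maxDegree_eq_of_iso' e, chromaticNumber_eq_of_iso' e] at h1

theorem minForbUpsilon_exists_dominating (k : ℕ) {V : Type*} [Fintype V]
    (G : SimpleGraph V) (h : MinForbUpsilon k G) :
    ∃ v : V, IsDominatingVertex G v := by
  by_contra hdom
  push_neg at hdom
  obtain ⟨s, hs, hfail⟩ : ∃ s : Finset V, s.Nonempty ∧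
      ¬ (((G.induce (s : Set V)).maxDegree + 1 : ℕ∞) ≤
        (G.induce (s : Set V)).chromaticNumber + (k : ℕ∞)) := by
    have := h.1
    unfold UpsilonMem at this
    push_neg at this
    obtain ⟨s, hs1, hs2⟩ := this
    exact ⟨s, hs1, not_le_of_gt hs2⟩
  have hVne : Nonempty V := ⟨hs.choose⟩
  have hsu : s = Finset.univ := by
    by_contra hne
    have hmem := h.2 s hne
    have : Nonempty ((s : Set V) : Type _) := ⟨⟨hs.choose, hs.choose_spec⟩⟩
    exact hfail (upsilon_self' k _ hmem)
  subst hsu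
  have e : G.induce ((Finset.univ : Finset V) : Set V) ≃g G :=
    { toEquiv := Equiv.subtypeUnivEquiv (by simp)
      map_rel_iff' := Iff.rfl }
  rw [maxDegree_eq_of_iso' e, chromaticNumber_eq_of_iso' e] at hfail
  obtain ⟨v, hv⟩ := G.exists_maximal_degree_vertex
  have hd := hdom v
  unfold IsDominatingVertex at hd
  push_neg at hd
  obtain ⟨w, hwv, hnadj⟩ := hd
  set t : Finset V := insert v (G.neighborFinset v) with ht
  have hwt : w ∉ t := by
    simp only [ht, Finset.mem_insert, mem_neighborFinset]
    push_neg
    exact ⟨hwv, hnadj⟩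
  have htne : t ≠ Finset.univ := fun hh => hwt (hh ▸ Finset.mem_univ w)
  have hvt : v ∈ t := Finset.mem_insert_self _ _
  have : Nonempty ((t : Set V) : Type _) := ⟨⟨v, hvt⟩⟩
  have hb := upsilon_self' k _ (h.2 t htne)
  have hdeg : (G.induce (t : Set V)).degree ⟨v, hvt⟩ = G.degree v := by
    rw [← card_neighborSet_eq_degree, ← card_neighborSet_eq_degree]
    apply Fintype.card_congr
    refine ⟨fun x => ⟨x.1.1, x.2⟩, fun y => ⟨⟨y.1, ?_⟩, y.2⟩, fun x => rfl, fun y => rfl⟩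
    · simp only [ht, Finset.coe_insert, Set.mem_insert_iff, Finset.mem_coe,
        mem_neighborFinset]
      exact Or.inr y.2
  have hdle : G.maxDegree ≤ (G.induce (t : Set V)).maxDegree := by
    rw [hv, ← hdeg]
    exact degree_le_maxDegree _ _
  have hcle : (G.induce (t : Set V)).chromaticNumber ≤ G.chromaticNumber :=
    chromaticNumber_mono_of_hom (Embedding.induce _).toHom
  apply hfail
  calc ((G.maxDegree : ℕ∞) + 1) ≤ ((G.induce (t : Set V)).maxDegree : ℕ∞) + 1 := by
        exact add_le_add_left (Nat.cast_le.mpr hdle) 1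
    _ ≤ (G.induce (t : Set V)).chromaticNumber + (k : ℕ∞) := hb
    _ ≤ G.chromaticNumber + (k : ℕ∞) := add_le_add_left hcle _
end

section
/- If G is a minimal forbidden induced subgraph for Υ_k, then G has a unique dominating vertex. -/
open SimpleGraph

attribute [local instance] Classical.propDecidable

set_option linter.unnecessarySeqFocus false

open SimpleGraph

attribute [local instance] Classical.propDecidable

section Aux

variable {W : Type*} [Fintype W] (H : SimpleGraph W)

lemma aux_degree_induce_le (s : Finset W) (v : (s : Set W)) :
    (H.induce (s : Set W)).degree v ≤ H.degree (v : W) := by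
  classical
  rw [← SimpleGraph.card_neighborFinset_eq_degree, ← SimpleGraph.card_neighborFinset_eq_degree]
  refine Finset.card_le_card_of_injOn (fun w => (w : W)) ?_ ?_
  · intro w hw
    rw [Finset.mem_coe, SimpleGraph.mem_neighborFinset] at hw ⊢
    exact hw
  · intro a _ b _ hab
    exact Subtype.ext hab

lemma aux_degree_induce_eq (s : Finset W) (v : (s : Set W))
    (hv : ∀ w, H.Adj (v : W) w → w ∈ s) :
    (H.induce (s : Set W)).degree v = H.degree (v : W) := by
  classical
  rw [← SimpleGraph.card_neighborFinset_eq_degree, ← SimpleGraph.card_neighborFinset_eq_degree]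
  refine Finset.card_bij (fun w _ => (w : W)) ?_ ?_ ?_
  · intro w hw
    rw [SimpleGraph.mem_neighborFinset] at hw ⊢
    exact hw
  · intro a _ b _ hab
    exact Subtype.ext hab
  · intro b hb
    rw [SimpleGraph.mem_neighborFinset] at hb
    exact ⟨⟨b, hv b hb⟩, by rwa [SimpleGraph.mem_neighborFinset], rfl⟩

/-- iso between `H.induce ↑univ` and `H`. -/
noncomputable def auxUnivIso : H.induce ((Finset.univ : Finset W) : Set W) ≃g H where
  toEquiv := Equiv.subtypeUnivEquiv (fun x => by simp)
  map_rel_iff' := Iff.rfl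

lemma aux_chrom_univ :
    (H.induce ((Finset.univ : Finset W) : Set W)).chromaticNumber = H.chromaticNumber :=
  le_antisymm (chromaticNumber_mono_of_hom (auxUnivIso H).toEmbedding.toHom)
    (chromaticNumber_mono_of_hom (auxUnivIso H).symm.toEmbedding.toHom)

lemma aux_maxDeg_univ [Nonempty W] :
    (H.induce ((Finset.univ : Finset W) : Set W)).maxDegree = H.maxDegree := by
  apply le_antisymm
  · apply SimpleGraph.maxDegree_le_of_forall_degree_le
    intro v
    exact (aux_degree_induce_le H _ v).trans (H.degree_le_maxDegree _)
  · obtain ⟨v, hv⟩ := H.exists_maximal_degree_vertex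
    rw [hv, ← aux_degree_induce_eq H Finset.univ ⟨v, by simp⟩ (fun w _ => Finset.mem_univ w)]
    exact SimpleGraph.degree_le_maxDegree _ _

end Aux

theorem minForbUpsilon_existsUnique_dominating (k : ℕ) {V : Type*} [Fintype V]
    (G : SimpleGraph V) (h : MinForbUpsilon k G) :
    ∃! v : V, IsDominatingVertex G v := by
  classical
  obtain ⟨hfail, hmin⟩ := h
  rw [UpsilonMem] at hfail
  push_neg at hfail
  obtain ⟨s, hs, hlt⟩ := hfail
  -- the failing set must be univ
  have hsu : s = Finset.univ := by
    by_contra hne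
    haveI : Nonempty ((s : Set V)) := by obtain ⟨x, hx⟩ := hs; exact ⟨⟨x, hx⟩⟩
    have hU := hmin s hne Finset.univ Finset.univ_nonempty
    rw [aux_chrom_univ, aux_maxDeg_univ] at hU
    exact absurd hU (not_le.mpr hlt)
  subst hsu
  have hVne : Nonempty V := by obtain ⟨x, _⟩ := hs; exact ⟨x⟩
  rw [aux_chrom_univ, aux_maxDeg_univ] at hlt
  -- chromatic number as a natural number
  have hχtop : G.chromaticNumber ≠ ⊤ :=
    ((G.colorable_of_fintype.chromaticNumber_le).trans_lt (WithTop.coe_lt_top _)).ne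
  set m : ℕ := G.chromaticNumber.toNat with hmdef
  have hm : G.chromaticNumber = (m : ℕ∞) := (ENat.coe_toNat hχtop).symm
  have hκ : m + k ≤ G.maxDegree := by
    rw [hm] at hlt
    have : (m : ℕ∞) + (k : ℕ∞) < ((G.maxDegree : ℕ) : ℕ∞) + 1 := hlt
    have h2 : m + k < G.maxDegree + 1 := by exact_mod_cast this
    omega
  obtain ⟨v, hv⟩ := G.exists_maximal_degree_vertex
  have hdom : IsDominatingVertex G v := by
    by_contra hnd
    rw [IsDominatingVertex] at hnd
    push_neg at hnd
    obtain ⟨w, hwv, hnadj⟩ := hnd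
    set t : Finset V := Finset.univ.erase w with htdef
    have hvt : v ∈ t := Finset.mem_erase.mpr ⟨fun hh => hwv hh.symm, Finset.mem_univ v⟩
    have htne : t ≠ Finset.univ := fun hh => (Finset.notMem_erase w _) (hh ▸ Finset.mem_univ w)
    haveI : Nonempty ((t : Set V)) := ⟨⟨v, hvt⟩⟩
    have hU := hmin t htne Finset.univ (Finset.univ_nonempty)
    rw [aux_chrom_univ, aux_maxDeg_univ] at hU
    -- degree of v is preserved
    have hdeg : (G.induce (t : Set V)).degree ⟨v, hvt⟩ = G.degree v := by
      apply aux_degree_induce_eq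
      intro u hu
      refine Finset.mem_erase.mpr ⟨fun hh => hnadj (hh ▸ hu), Finset.mem_univ u⟩
    have hΔ : G.maxDegree ≤ (G.induce (t : Set V)).maxDegree := by
      rw [hv, ← hdeg]
      exact SimpleGraph.degree_le_maxDegree _ _
    have hχt : (G.induce (t : Set V)).chromaticNumber ≤ (m : ℕ∞) := by
      rw [← hm]
      exact chromaticNumber_mono_of_hom (SimpleGraph.Embedding.induce _).toHom
    -- chain
    have hchain : ((G.maxDegree : ℕ∞) + 1) ≤ (m : ℕ∞) + (k : ℕ∞) := by
      calc ((G.maxDegree : ℕ∞) + 1) ≤ ((G.induce (t : Set V)).maxDegree : ℕ∞) + 1 := by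
            exact_mod_cast add_le_add_left (by exact_mod_cast hΔ) 1
        _ ≤ (G.induce (t : Set V)).chromaticNumber + (k : ℕ∞) := hU
        _ ≤ (m : ℕ∞) + (k : ℕ∞) := add_le_add_left hχt _
    have : G.maxDegree + 1 ≤ m + k := by exact_mod_cast hchain
    omega
  refine ⟨v, hdom, ?_⟩
  intro v₂ hdom₂
  by_contra hne
  -- two distinct dominating vertices
  set t : Finset V := Finset.univ.erase v₂ with htdef
  have hvt : v ∈ t := Finset.mem_erase.mpr ⟨fun hh => hne hh.symm, Finset.mem_univ v⟩
  have htne : t ≠ Finset.univ := fun hh => (Finset.notMem_erase v₂ _) (hh ▸ Finset.mem_univ v₂)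
  haveI : Nonempty ((t : Set V)) := ⟨⟨v, hvt⟩⟩
  have hU := hmin t htne Finset.univ (Finset.univ_nonempty)
  rw [aux_chrom_univ, aux_maxDeg_univ] at hU
  set n : ℕ := Fintype.card V with hndef
  have hn2 : 2 ≤ n := Fintype.one_lt_card_iff_nontrivial.mpr ⟨⟨v, v₂, fun hh => hne hh.symm⟩⟩
  -- t has n - 1 elements
  have htcard : Fintype.card ((t : Set V)) = n - 1 := by
    have hc : Fintype.card ((t : Set V)) = t.card := by
      rw [← Fintype.card_coe t]
      exact Fintype.card_congr (Equiv.subtypeEquivRight (fun x => by simp))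
    rw [hc, htdef, Finset.card_erase_of_mem (Finset.mem_univ v₂), Finset.card_univ]
  -- degree of v in induced graph is ≥ n - 2
  have hdegt : n - 2 ≤ (G.induce (t : Set V)).degree ⟨v, hvt⟩ := by
    rw [← SimpleGraph.card_neighborFinset_eq_degree]
    have hsub : Finset.univ.erase (⟨v, hvt⟩ : (t : Set V)) ⊆
        (G.induce (t : Set V)).neighborFinset ⟨v, hvt⟩ := by
      intro u hu
      rw [SimpleGraph.mem_neighborFinset]
      have hune : (u : V) ≠ v := fun hh =>
        (Finset.mem_erase.mp hu).1 (Subtype.ext hh)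
      exact hdom _ hune
    have := Finset.card_le_card hsub
    rw [Finset.card_erase_of_mem (Finset.mem_univ _), Finset.card_univ, htcard] at this
    omega
  have hΔt : n - 2 ≤ (G.induce (t : Set V)).maxDegree :=
    hdegt.trans (SimpleGraph.degree_le_maxDegree _ _)
  -- chromatic number of induced graph ≤ m - 1
  have hm1 : 1 ≤ m := by
    have := G.chromaticNumber_pos G.colorable_of_fintype
    rw [hm] at this
    exact_mod_cast this
  obtain ⟨C⟩ : G.Colorable m := G.colorable_chromaticNumber_of_fintype
  have hCol : (G.induce (t : Set V)).Colorable (m - 1) := by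
    have C' : (G.induce (t : Set V)).Coloring {c : Fin m // c ≠ C v₂} := by
      refine SimpleGraph.Coloring.mk (fun u => ⟨C u, ?_⟩) ?_
      · have hune : (u : V) ≠ v₂ := (Finset.mem_erase.mp u.2).1
        exact fun hh => (C.valid (hdom₂ _ hune)) hh.symm
      · intro a b hab hc
        exact (C.valid hab) (congrArg Subtype.val hc)
    have := C'.colorable
    have hcard : Fintype.card {c : Fin m // c ≠ C v₂} = m - 1 := by
      simp [Fintype.card_subtype_compl, Fintype.card_subtype_eq]
    rwa [hcard] at this
  have hχt : (G.induce (t : Set V)).chromaticNumber ≤ ((m - 1 : ℕ) : ℕ∞) :=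
    hCol.chromaticNumber_le
  have hΔle : G.maxDegree ≤ n - 1 := by
    have := G.maxDegree_lt_card_verts
    omega
  have hchain : (((n - 2 : ℕ) : ℕ∞) + 1) ≤ ((m - 1 : ℕ) : ℕ∞) + (k : ℕ∞) := by
    calc (((n - 2 : ℕ) : ℕ∞) + 1) ≤ ((G.induce (t : Set V)).maxDegree : ℕ∞) + 1 := by
          exact_mod_cast add_le_add_left (by exact_mod_cast hΔt) 1
      _ ≤ (G.induce (t : Set V)).chromaticNumber + (k : ℕ∞) := hU
      _ ≤ ((m - 1 : ℕ) : ℕ∞) + (k : ℕ∞) := add_le_add_left hχt _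
  have hfin : n - 2 + 1 ≤ m - 1 + k := by exact_mod_cast hchain
  omega
end

section
/- If G is a minimal forbidden induced subgraph for Υ_k with dominating vertex v, then for every vertex x ≠ v, χ(G - x) = χ(G); equivalently, in every optimal proper coloring of G - v, each color class has at least two vertices. -/
open SimpleGraph

attribute [local instance] Classical.propDecidable

set_option linter.unnecessarySeqFocus false

private def induceIsoOfSetEq {V : Type*} {G : SimpleGraph V} {S T : Set V} (h : S = T) :
    G.induce S ≃g G.induce T where
  toEquiv := Equiv.subtypeEquiv (Equiv.refl V) (by simp [h])
  map_rel_iff' := Iff.rfl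

private def induceIsoUniv {V : Type*} {G : SimpleGraph V} {S : Set V} (h : ∀ a, a ∈ S) :
    G.induce S ≃g G where
  toEquiv := Equiv.subtypeUnivEquiv h
  map_rel_iff' := Iff.rfl

private lemma iso_degree_eq {V W : Type*} [Fintype V] [Fintype W]
    {G : SimpleGraph V} {H : SimpleGraph W} [DecidableRel G.Adj] [DecidableRel H.Adj]
    (e : G ≃g H) (w : V) : G.degree w = H.degree (e w) := by
  rw [← SimpleGraph.card_neighborSet_eq_degree, ← SimpleGraph.card_neighborSet_eq_degree]
  exact Fintype.card_congr (e.mapNeighborSet w)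

private lemma iso_maxDegree_le {V W : Type*} [Fintype V] [Fintype W]
    {G : SimpleGraph V} {H : SimpleGraph W} [DecidableRel G.Adj] [DecidableRel H.Adj]
    (e : G ≃g H) : G.maxDegree ≤ H.maxDegree := by
  apply SimpleGraph.maxDegree_le_of_forall_degree_le
  intro w
  rw [iso_degree_eq e w]
  exact SimpleGraph.degree_le_maxDegree _ _

private lemma iso_maxDegree_eq {V W : Type*} [Fintype V] [Fintype W]
    {G : SimpleGraph V} {H : SimpleGraph W} [DecidableRel G.Adj] [DecidableRel H.Adj]
    (e : G ≃g H) : G.maxDegree = H.maxDegree :=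
  le_antisymm (iso_maxDegree_le e) (iso_maxDegree_le e.symm)

private lemma iso_chromaticNumber_eq {V W : Type*}
    {G : SimpleGraph V} {H : SimpleGraph W}
    (e : G ≃g H) : G.chromaticNumber = H.chromaticNumber :=
  le_antisymm (SimpleGraph.chromaticNumber_mono_of_hom e.toEmbedding.toHom)
    (SimpleGraph.chromaticNumber_mono_of_hom e.symm.toEmbedding.toHom)

private lemma upsilonMem_max (k : ℕ) {V : Type*} [Fintype V] [Nonempty V] {G : SimpleGraph V}
    (h : UpsilonMem k G) :
    (G.maxDegree + 1 : ℕ∞) ≤ G.chromaticNumber + (k : ℕ∞) := by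
  have h1 := h Finset.univ Finset.univ_nonempty
  rwa [iso_maxDegree_eq (induceIsoUniv (fun a => by simp)),
    iso_chromaticNumber_eq (induceIsoUniv (fun a => by simp))] at h1

private lemma exists_chrom {V : Type*} [Fintype V] (G : SimpleGraph V) :
    ∃ m : ℕ, (m : ℕ∞) = G.chromaticNumber ∧ G.Colorable m := by
  have hc := G.colorable_chromaticNumber_of_fintype
  refine ⟨(G.chromaticNumber).toNat, ?_, hc⟩
  rw [ENat.coe_toNat]
  rw [SimpleGraph.chromaticNumber_ne_top_iff_exists]
  exact ⟨_, hc⟩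

private lemma degree_induce_ge {V : Type*} [Fintype V] {G : SimpleGraph V} {v : V}
    (hv : IsDominatingVertex G v) (S : Set V) (hvS : v ∈ S)
    [Fintype ((G.induce S).neighborSet ⟨v, hvS⟩)] :
    Nat.card {w : S // (w : V) ≠ v} ≤ (G.induce S).degree ⟨v, hvS⟩ := by
  rw [Nat.card_eq_fintype_card, ← SimpleGraph.card_neighborSet_eq_degree]
  have hinj : Function.Injective (fun w : {w : S // (w : V) ≠ v} =>
      (⟨w.1, hv w.1 w.2⟩ : (G.induce S).neighborSet ⟨v, hvS⟩)) := by
    intro a b hab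
    simp only [Subtype.mk.injEq] at hab
    exact Subtype.ext (congrArg (fun z : (G.induce S).neighborSet ⟨v, hvS⟩ => (z : S)) hab)
  exact Fintype.card_le_of_injective _ hinj

private lemma card_ne2 {V : Type*} [Fintype V] (x v : V) (hxv : x ≠ v) :
    Nat.card {w : ({x}ᶜ : Set V) // (w : V) ≠ v} = Fintype.card V - 2 := by
  rw [Nat.card_eq_fintype_card]
  calc Fintype.card {w : ({x}ᶜ : Set V) // (w : V) ≠ v}
      = Fintype.card {w : V // w ∈ ({x}ᶜ : Set V) ∧ w ≠ v} :=
        Fintype.card_congr (Equiv.subtypeSubtypeEquivSubtypeInter (· ∈ ({x}ᶜ : Set V)) (· ≠ v))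
    _ = Fintype.card {w : V // ¬ (w = x ∨ w = v)} :=
        Fintype.card_congr (Equiv.subtypeEquivRight (by intro w; simp [not_or]))
    _ = Fintype.card V - Fintype.card {w : V // w = x ∨ w = v} :=
        Fintype.card_subtype_compl _
    _ = Fintype.card V - 2 := by
        congr 1
        have h1 : Fintype.card {w : V // w = x ∨ w = v} = ({x, v} : Finset V).card := by
          rw [← Fintype.card_coe]
          exact Fintype.card_congr (Equiv.subtypeEquivRight (fun w => by simp))
        rw [h1, Finset.card_insert_of_notMem (by simp [hxv]), Finset.card_singleton]

theorem minForbUpsilon_chromatic_delete (k : ℕ) {V : Type*} [Fintype V]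
    (G : SimpleGraph V) (v : V) (h : MinForbUpsilon k G)
    (hv : IsDominatingVertex G v) :
    (∀ x : V, x ≠ v →
        (G.induce ({x}ᶜ : Set V)).chromaticNumber = G.chromaticNumber) ∧
      AllColorClassesBig (G.induce ({v}ᶜ : Set V)) := by
  have hvV : Nonempty V := ⟨v⟩
  obtain ⟨m, hm, hmc⟩ := exists_chrom G
  -- Fact A: the Upsilon inequality fails for G itself
  have factA : ¬ ((G.maxDegree + 1 : ℕ∞) ≤ G.chromaticNumber + (k : ℕ∞)) := by
    intro hle
    apply h.1
    intro s hs
    by_cases hsu : s = Finset.univ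
    · subst hsu
      rw [iso_maxDegree_eq (induceIsoUniv (fun a => by simp)),
        iso_chromaticNumber_eq (induceIsoUniv (fun a => by simp))]
      exact hle
    · obtain ⟨a, ha⟩ := hs
      have hne : Nonempty ((s : Set V) : Type _) := ⟨⟨a, by simpa using ha⟩⟩
      exact upsilonMem_max k (h.2 s hsu)
  have hA : m + k ≤ G.maxDegree := by
    rw [← hm] at factA
    push_neg at factA
    have h1 : ((m + k : ℕ) : ℕ∞) < ((G.maxDegree + 1 : ℕ) : ℕ∞) := by
      push_cast
      exact factA
    have h2 : m + k < G.maxDegree + 1 := by exact_mod_cast h1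
    omega
  have hB : m + k + 1 ≤ Fintype.card V := by
    have := G.maxDegree_lt_card_verts
    omega
  -- Part 1
  have key : ∀ x : V, x ≠ v →
      (G.induce ({x}ᶜ : Set V)).chromaticNumber = G.chromaticNumber := by
    intro x hx
    obtain ⟨m', hm', hm'c⟩ := exists_chrom (G.induce ({x}ᶜ : Set V))
    have hle : (G.induce ({x}ᶜ : Set V)).chromaticNumber ≤ G.chromaticNumber :=
      SimpleGraph.chromaticNumber_mono_of_hom (SimpleGraph.Embedding.induce _).toHom
    have hup : UpsilonMem k (G.induce ((((({x} : Finset V)ᶜ) : Finset V) : Set V))) := by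
      apply h.2
      intro hcon
      have hxmem : x ∈ (({x} : Finset V)ᶜ) := hcon ▸ Finset.mem_univ x
      simp at hxmem
    have hvmem : v ∈ ({x}ᶜ : Set V) := by simp [Ne.symm hx]
    have hne : Nonempty ((((({x} : Finset V)ᶜ : Finset V)) : Set V) : Type _) :=
      ⟨⟨v, by simp [Ne.symm hx]⟩⟩
    have hne2 : Nonempty (({x}ᶜ : Set V) : Type _) := ⟨⟨v, hvmem⟩⟩
    have hmax := upsilonMem_max k hup
    have hSeq : (((({x} : Finset V)ᶜ : Finset V)) : Set V) = ({x}ᶜ : Set V) := by simp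
    erw [iso_maxDegree_eq (induceIsoOfSetEq (G := G) hSeq),
      iso_chromaticNumber_eq (induceIsoOfSetEq (G := G) hSeq)] at hmax
    have hdeg : Fintype.card V - 2 ≤ (G.induce ({x}ᶜ : Set V)).maxDegree := by
      refine le_trans ?_ (SimpleGraph.degree_le_maxDegree _ ⟨v, hvmem⟩)
      rw [← card_ne2 x v hx]
      exact degree_induce_ge hv _ hvmem
    rw [← hm'] at hmax
    have hmaxN : (G.induce ({x}ᶜ : Set V)).maxDegree + 1 ≤ m' + k := by
      have : (((G.induce ({x}ᶜ : Set V)).maxDegree + 1 : ℕ) : ℕ∞) ≤ ((m' + k : ℕ) : ℕ∞) := by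
        push_cast
        exact hmax
      exact_mod_cast this
    have hcard2 : 2 ≤ Fintype.card V := Fintype.one_lt_card_iff_nontrivial.mpr ⟨⟨x, v, hx⟩⟩
    have hm'le : m' ≤ m := by
      rw [← hm', ← hm] at hle
      exact_mod_cast hle
    have : m' = m := by omega
    rw [← hm', ← hm, this]
  refine ⟨key, ?_⟩
  -- Part 2
  intro n C hn c hc
  by_contra hsmall
  push_neg at hsmall
  obtain ⟨u, hu⟩ := hc
  have huniq : ∀ w, C w = c → w = u := by
    intro w hw
    have hcard1 : Fintype.card {u // C u = c} ≤ 1 := by omega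
    have := Fintype.card_le_one_iff.mp hcard1 ⟨w, hw⟩ ⟨u, hu⟩
    exact congrArg Subtype.val this
  have hx : (u : V) ≠ v := by
    have h2 := u.2
    simp only [Set.mem_compl_iff, Set.mem_singleton_iff] at h2
    exact h2
  have hmpos : 0 < m := by
    by_contra hm0
    have hm0' : m = 0 := by omega
    subst hm0'
    have : IsEmpty V := by
      apply SimpleGraph.isEmpty_of_chromaticNumber_eq_zero (G := G)
      rw [← hm]
      norm_num
    exact this.elim v
  have hnm : n + 1 ≤ m := by
    obtain ⟨D⟩ := hmc
    have hcolv : (G.induce ({v}ᶜ : Set V)).Colorable (m - 1) := by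
      have E : (G.induce ({v}ᶜ : Set V)).Coloring {c' : Fin m // c' ≠ D v} := by
        refine SimpleGraph.Coloring.mk
          (fun w => ⟨D w.1, fun hcc => ?_⟩) ?_
        · have hwv : (w : V) ≠ v := by
            have h2 := w.2
            simp only [Set.mem_compl_iff, Set.mem_singleton_iff] at h2
            exact h2
          exact (D.valid (hv w.1 hwv)) hcc.symm
        · intro a b hab hfab
          exact (D.valid hab) (congrArg Subtype.val hfab)
      have hcard : Fintype.card {c' : Fin m // c' ≠ D v} = m - 1 := by
        have := Fintype.card_subtype_compl (fun c' : Fin m => c' = D v)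
        simp only [Fintype.card_subtype_eq, Fintype.card_fin] at this
        exact this
      have := E.colorable
      rwa [hcard] at this
    have hlev : (G.induce ({v}ᶜ : Set V)).chromaticNumber ≤ (m - 1 : ℕ) :=
      hcolv.chromaticNumber_le
    rw [← hn] at hlev
    have : n ≤ m - 1 := by exact_mod_cast hlev
    omega
  -- color G - u with n colors
  have hcol : (G.induce (({(u : V)}ᶜ : Set V))).Colorable n := by
    refine ⟨SimpleGraph.Coloring.mk
      (fun w => if h' : (w : V) = v then c
        else C ⟨w.1, by simp only [Set.mem_compl_iff, Set.mem_singleton_iff]; exact h'⟩) ?_⟩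
    intro a b hab hfab
    have hadj : G.Adj (a : V) (b : V) := hab
    by_cases ha : (a : V) = v <;> by_cases hb : (b : V) = v
    · rw [ha, hb] at hadj
      exact G.loopless.irrefl v hadj
    · simp only [dif_pos ha, dif_neg hb] at hfab
      have h1 := huniq _ hfab.symm
      have hbu : (b : V) = (u : V) := congrArg Subtype.val h1
      have h2 : (b : V) ∈ ({(u : V)}ᶜ : Set V) := b.2
      simp only [Set.mem_compl_iff, Set.mem_singleton_iff] at h2
      exact h2 hbu
    · simp only [dif_neg ha, dif_pos hb] at hfab
      have h1 := huniq _ hfab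
      have hau : (a : V) = (u : V) := congrArg Subtype.val h1
      have h2 : (a : V) ∈ ({(u : V)}ᶜ : Set V) := a.2
      simp only [Set.mem_compl_iff, Set.mem_singleton_iff] at h2
      exact h2 hau
    · simp only [dif_neg ha, dif_neg hb] at hfab
      have hadj' : (G.induce ({v}ᶜ : Set V)).Adj
          ⟨a.1, by simp only [Set.mem_compl_iff, Set.mem_singleton_iff]; exact ha⟩
          ⟨b.1, by simp only [Set.mem_compl_iff, Set.mem_singleton_iff]; exact hb⟩ := hadj
      exact (C.valid hadj') hfab
  have hchi : (G.induce (({(u : V)}ᶜ : Set V))).chromaticNumber ≤ (n : ℕ) :=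
    hcol.chromaticNumber_le
  rw [key (u : V) hx, ← hm] at hchi
  have : m ≤ n := by exact_mod_cast hchi
  omega
end

section
/- Let k ∈ ℕ₀ and let G be a graph. G is a minimal forbidden induced subgraph for Υ_k if and only if: (1) G has a unique dominating vertex v; (2) every color class in every optimal proper coloring of G - v has at least two vertices; and (3) Δ(G) = χ(G) + k. -/
open SimpleGraph

attribute [local instance] Classical.propDecidable

set_option linter.unnecessarySeqFocus false

set_option linter.unusedSectionVars false
set_option maxHeartbeats 1000000

----------------------------------------------------------------
-- chi toolkit

noncomputable def chi {W : Type*} [Fintype W] (G : SimpleGraph W) : ℕ := G.chromaticNumber.toNat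

lemma chi_spec {W : Type*} [Fintype W] (G : SimpleGraph W) :
    G.chromaticNumber = (chi G : ℕ∞) := by
  have h := G.colorable_of_fintype
  have : G.chromaticNumber ≠ ⊤ := by
    rw [chromaticNumber_ne_top_iff_exists]; exact ⟨_, h⟩
  exact (ENat.coe_toNat this).symm

lemma chi_colorable {W : Type*} [Fintype W] (G : SimpleGraph W) : G.Colorable (chi G) :=
  colorable_chromaticNumber_of_fintype G

lemma chi_le {W : Type*} [Fintype W] {G : SimpleGraph W} {n : ℕ} (h : G.Colorable n) :
    chi G ≤ n := by
  have := h.chromaticNumber_le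
  rw [chi_spec] at this
  exact_mod_cast this

lemma chi_pos {W : Type*} [Fintype W] [Nonempty W] (G : SimpleGraph W) : 1 ≤ chi G := by
  have := chromaticNumber_pos (G := G) (G.colorable_of_fintype)
  rw [chi_spec] at this
  exact_mod_cast this

lemma chi_le_of_embedding {A B : Type*} [Fintype A] [Fintype B] {G1 : SimpleGraph A}
    {G2 : SimpleGraph B} (e : G1 ↪g G2) : chi G1 ≤ chi G2 :=
  chi_le (Colorable.of_hom e.toHom (chi_colorable G2))

lemma chi_eq_of_iso {A B : Type*} [Fintype A] [Fintype B] {G1 : SimpleGraph A}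
    {G2 : SimpleGraph B} (e : G1 ≃g G2) : chi G1 = chi G2 :=
  le_antisymm (chi_le_of_embedding e.toEmbedding) (chi_le_of_embedding e.symm.toEmbedding)

lemma degree_eq_of_iso {A B : Type*} [Fintype A] [Fintype B] {G1 : SimpleGraph A}
    {G2 : SimpleGraph B} [DecidableRel G1.Adj] [DecidableRel G2.Adj] (e : G1 ≃g G2) (a : A) : G1.degree a = G2.degree (e a) := by
  rw [← card_neighborSet_eq_degree, ← card_neighborSet_eq_degree]
  exact Fintype.card_congr (e.mapNeighborSet a)

lemma maxDegree_eq_of_iso {A B : Type*} [Fintype A] [Fintype B] {G1 : SimpleGraph A}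
    {G2 : SimpleGraph B} {i1 : DecidableRel G1.Adj} {i2 : DecidableRel G2.Adj} (e : G1 ≃g G2) : G1.maxDegree = G2.maxDegree := by
  apply le_antisymm
  · apply maxDegree_le_of_forall_degree_le
    intro a
    rw [degree_eq_of_iso e a]
    exact degree_le_maxDegree _ _
  · apply maxDegree_le_of_forall_degree_le
    intro b
    rw [degree_eq_of_iso e.symm b]
    exact degree_le_maxDegree _ _

lemma enat_bound_iff {W : Type*} [Fintype W] (H : SimpleGraph W) [DecidableRel H.Adj] (k : ℕ) :
    ((H.maxDegree + 1 : ℕ∞) ≤ H.chromaticNumber + (k : ℕ∞)) ↔ H.maxDegree + 1 ≤ chi H + k := by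
  rw [chi_spec]
  constructor
  · intro h; exact_mod_cast h
  · intro h; exact_mod_cast h

noncomputable def induceInduceIso {V : Type*} (G : SimpleGraph V) (s : Set V) (t : Set s) :
    (G.induce s).induce t ≃g G.induce (Subtype.val '' t) where
  toEquiv := Equiv.Set.image Subtype.val t Subtype.val_injective
  map_rel_iff' := Iff.rfl

noncomputable def induceSetCongr {V : Type*} (G : SimpleGraph V) {A B : Set V} (h : A = B) :
    G.induce A ≃g G.induce B := by subst h; exact { toEquiv := Equiv.refl _, map_rel_iff' := Iff.rfl }

noncomputable def induceSubsetEmb {V : Type*} (G : SimpleGraph V) {A B : Set V} (h : A ⊆ B) :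
    G.induce A ↪g G.induce B where
  toFun := Set.inclusion h
  inj' := Set.inclusion_injective h
  map_rel_iff' := Iff.rfl

section Main

variable {V : Type*} [Fintype V] (G : SimpleGraph V)

lemma mem_erase_coe {s : Finset V} {x a : V} (ha : a ∈ (s : Set V)) (h : a ≠ x) :
    a ∈ ((s.erase x : Finset V) : Set V) := by
  simp [Finset.mem_erase]; exact ⟨ha, h⟩

lemma mem_of_mem_erase_coe {s : Finset V} {x a : V} (h : a ∈ ((s.erase x : Finset V) : Set V)) :
    a ∈ (s : Set V) := by
  simp only [Finset.coe_erase, Set.mem_diff] at h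
  exact h.1

lemma ne_of_mem_erase_coe {s : Finset V} {x a : V} (h : a ∈ ((s.erase x : Finset V) : Set V)) :
    a ≠ x := by
  simp only [Finset.coe_erase, Set.mem_diff, Set.mem_singleton_iff] at h
  exact h.2

lemma chi_le_succ (s : Finset V) (x : V) {m : ℕ}
    (hc : (G.induce ((s.erase x : Finset V) : Set V)).Colorable m) :
    (G.induce (s : Set V)).Colorable (m + 1) := by
  obtain ⟨C⟩ := hc
  refine ⟨⟨fun u => if h : u.val = x then Fin.last m
    else (C ⟨u.val, mem_erase_coe u.2 h⟩).castSucc, ?_⟩⟩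
  rintro ⟨a, ha⟩ ⟨b, hb⟩ hab
  have hGab : G.Adj a b := hab
  dsimp only
  split_ifs with h1 h2 h2
  · exact absurd hGab (by rw [h1, h2]; exact G.loopless.irrefl x)
  · intro hcc
    have h := (C ⟨b, mem_erase_coe hb h2⟩).isLt
    have h2 := congrArg Fin.val hcc
    simp at h2
    omega
  · intro hcc
    have h := (C ⟨a, mem_erase_coe ha h1⟩).isLt
    have h2 := congrArg Fin.val hcc
    simp at h2
    omega
  · intro hcc
    have hadj : (G.induce ((s.erase x : Finset V) : Set V)).Adj
        ⟨a, mem_erase_coe ha h1⟩ ⟨b, mem_erase_coe hb h2⟩ := hGab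
    exact C.valid hadj (by simpa [Fin.ext_iff] using hcc)

lemma chi_erase_le (s : Finset V) (x : V) :
    chi (G.induce (s : Set V)) ≤ chi (G.induce ((s.erase x : Finset V) : Set V)) + 1 :=
  chi_le (chi_le_succ G s x (chi_colorable _))

lemma colorable_erase_of_dominating (s : Finset V) (v : V) (hv : v ∈ (s : Set V))
    (hdom : ∀ w ∈ s, w ≠ v → G.Adj v w) {m : ℕ}
    (hc : (G.induce (s : Set V)).Colorable (m + 1)) :
    (G.induce ((s.erase v : Finset V) : Set V)).Colorable m := by
  obtain ⟨C⟩ := hc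
  have hne : ∀ u : ((s.erase v : Finset V) : Set V),
      C ⟨u.1, mem_of_mem_erase_coe u.2⟩ ≠ C ⟨v, hv⟩ := by
    intro u
    have hadj : (G.induce (s : Set V)).Adj ⟨v, hv⟩ ⟨u.1, mem_of_mem_erase_coe u.2⟩ :=
      hdom u.1 (by exact_mod_cast mem_of_mem_erase_coe u.2) (ne_of_mem_erase_coe u.2)
    exact fun h => C.valid hadj h.symm
  have hsome : ∀ u : ((s.erase v : Finset V) : Set V),
      (finSuccEquiv' (C ⟨v, hv⟩) (C ⟨u.1, mem_of_mem_erase_coe u.2⟩)).isSome := by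
    intro u
    rw [Option.isSome_iff_ne_none]
    intro h
    apply hne u
    apply (finSuccEquiv' (C ⟨v, hv⟩)).injective
    rw [h, finSuccEquiv'_at]
  refine ⟨⟨fun u => (finSuccEquiv' (C ⟨v, hv⟩) (C ⟨u.1, mem_of_mem_erase_coe u.2⟩)).get (hsome u),
    ?_⟩⟩
  intro a b hab hcc
  have hGab : G.Adj a.1 b.1 := hab
  have hadj : (G.induce (s : Set V)).Adj ⟨a.1, mem_of_mem_erase_coe a.2⟩
      ⟨b.1, mem_of_mem_erase_coe b.2⟩ := hGab
  apply C.valid hadj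
  apply (finSuccEquiv' (C ⟨v, hv⟩)).injective
  rw [← Option.some_get (hsome a), ← Option.some_get (hsome b)]
  exact congrArg _ hcc

/-- If `v` dominates `s`, then `χ(G[s]) = χ(G[s \ v]) + 1`. -/
lemma chi_of_dominating (s : Finset V) (v : V) (hv : v ∈ s)
    (hdom : ∀ w ∈ s, w ≠ v → G.Adj v w) :
    chi (G.induce (s : Set V)) = chi (G.induce ((s.erase v : Finset V) : Set V)) + 1 := by
  have hne : Nonempty ((s : Set V)) := ⟨⟨v, by exact_mod_cast hv⟩⟩
  have h1 : 1 ≤ chi (G.induce (s : Set V)) := chi_pos _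
  obtain ⟨m, hm⟩ : ∃ m, chi (G.induce (s : Set V)) = m + 1 := ⟨_, (Nat.succ_pred_eq_of_pos h1).symm⟩
  have hcol : (G.induce (s : Set V)).Colorable (m + 1) := hm ▸ chi_colorable _
  have h2 := chi_le (colorable_erase_of_dominating G s v (by exact_mod_cast hv) hdom hcol)
  have h3 := chi_erase_le G s v
  omega

----------------------------------------------------------------
-- degrees

lemma degree_induce (s : Finset V) (u : V) (hu : u ∈ (s : Set V)) :
    (G.induce (s : Set V)).degree ⟨u, hu⟩ = (G.neighborFinset u ∩ s).card := by
  rw [← card_neighborFinset_eq_degree]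
  rw [← Finset.card_map ⟨Subtype.val, Subtype.val_injective⟩]
  congr 1
  ext x
  simp [mem_neighborFinset, comap_adj]

lemma degree_induce_le (s : Finset V) (u : V) (hu : u ∈ (s : Set V)) :
    (G.induce (s : Set V)).degree ⟨u, hu⟩ ≤ G.degree u := by
  rw [degree_induce, ← card_neighborFinset_eq_degree]
  exact Finset.card_le_card (Finset.inter_subset_left)

lemma degree_induce_eq (s : Finset V) (u : V) (hu : u ∈ (s : Set V))
    (hnb : G.neighborFinset u ⊆ s) :
    (G.induce (s : Set V)).degree ⟨u, hu⟩ = G.degree u := by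
  rw [degree_induce, ← card_neighborFinset_eq_degree]
  congr 1
  exact Finset.inter_eq_left.2 hnb

lemma degree_induce_dominating (s : Finset V) (v : V) (hv : v ∈ (s : Set V))
    (hdom : ∀ w ∈ s, w ≠ v → G.Adj v w) :
    (G.induce (s : Set V)).degree ⟨v, hv⟩ + 1 = s.card := by
  rw [degree_induce]
  have : G.neighborFinset v ∩ s = s.erase v := by
    ext w
    simp only [Finset.mem_inter, mem_neighborFinset, Finset.mem_erase]
    constructor
    · rintro ⟨hadj, hw⟩; exact ⟨(G.ne_of_adj hadj).symm, hw⟩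
    · rintro ⟨hne, hw⟩; exact ⟨hdom w hw hne, hw⟩
  rw [this, Finset.card_erase_add_one (by exact_mod_cast hv)]

lemma degree_induce_lt (s : Finset V) (u : V) (hu : u ∈ (s : Set V)) (v : V) (hv : v ∉ s)
    (hadj : G.Adj u v) :
    (G.induce (s : Set V)).degree ⟨u, hu⟩ + 1 ≤ G.degree u := by
  rw [degree_induce, ← card_neighborFinset_eq_degree]
  have hsub : G.neighborFinset u ∩ s ⊆ (G.neighborFinset u).erase v := by
    intro w hw
    rw [Finset.mem_erase]
    refine ⟨?_, (Finset.mem_inter.1 hw).1⟩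
    rintro rfl
    exact hv (Finset.mem_inter.1 hw).2
  have h1 := Finset.card_le_card hsub
  have h2 := Finset.card_erase_add_one (show v ∈ G.neighborFinset u from
    (mem_neighborFinset _ _ _).2 hadj)
  omega

lemma degree_dominating (v : V) (hdom : IsDominatingVertex G v) :
    G.degree v + 1 = Fintype.card V := by
  rw [← card_neighborFinset_eq_degree]
  have : G.neighborFinset v = Finset.univ.erase v := by
    ext w
    simp only [mem_neighborFinset, Finset.mem_erase, Finset.mem_univ, and_true]
    exact ⟨fun h => (G.ne_of_adj h).symm, fun h => hdom w h⟩
  rw [this, Finset.card_erase_add_one (Finset.mem_univ v), Finset.card_univ]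

lemma degree_not_dominating (u : V) (hdom : ¬ IsDominatingVertex G u) :
    G.degree u + 2 ≤ Fintype.card V := by
  rw [IsDominatingVertex] at hdom
  push_neg at hdom
  obtain ⟨w, hwu, hnadj⟩ := hdom
  have hsub : G.neighborFinset u ⊆ (Finset.univ.erase u).erase w := by
    intro x hx
    rw [mem_neighborFinset] at hx
    rw [Finset.mem_erase, Finset.mem_erase]
    refine ⟨?_, (G.ne_of_adj hx).symm, Finset.mem_univ x⟩
    rintro rfl
    exact hnadj hx
  have h1 := Finset.card_le_card hsub
  have h2 := Finset.card_erase_add_one (show w ∈ Finset.univ.erase u from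
    Finset.mem_erase.2 ⟨hwu, Finset.mem_univ w⟩)
  have h3 := Finset.card_erase_add_one (Finset.mem_univ u)
  rw [← card_neighborFinset_eq_degree]
  rw [Finset.card_univ] at h3
  omega

----------------------------------------------------------------
-- translation of UpsilonMem

lemma upsilonMem_iff_aux (k : ℕ) (s : Finset V) :
    UpsilonMem k (G.induce (s : Set V)) ↔
      ∀ t : Finset V, t ⊆ s → t.Nonempty →
        (G.induce (t : Set V)).maxDegree + 1 ≤ chi (G.induce (t : Set V)) + k := by
  constructor
  · intro h t hts htne
    set t' : Finset ((s : Set V)) := Finset.univ.filter (fun x => x.1 ∈ t) with ht'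
    have himg : Subtype.val '' ((t' : Finset ((s : Set V))) : Set ((s : Set V))) = (t : Set V) := by
      ext a
      simp only [Set.mem_image, Finset.coe_filter, Set.mem_setOf_eq, Finset.mem_coe]
      constructor
      · rintro ⟨x, hx, rfl⟩
        rw [ht'] at hx
        exact (Finset.mem_filter.1 hx).2
      · intro ha
        exact ⟨⟨a, by exact_mod_cast hts ha⟩, Finset.mem_filter.2 ⟨Finset.mem_univ _, ha⟩, rfl⟩
    have ht'ne : t'.Nonempty := by
      obtain ⟨a, ha⟩ := htne
      exact ⟨⟨a, by exact_mod_cast hts ha⟩, Finset.mem_filter.2 ⟨Finset.mem_univ _, ha⟩⟩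
    have hb := h t' ht'ne
    rw [enat_bound_iff] at hb
    have hiso : ((G.induce (s : Set V)).induce ((t' : Finset ((s : Set V))) : Set ((s : Set V))))
        ≃g G.induce (t : Set V) :=
      (induceInduceIso G (s : Set V) _).trans (induceSetCongr G himg)
    rwa [maxDegree_eq_of_iso hiso, chi_eq_of_iso hiso] at hb
  · intro h t' ht'ne
    set t : Finset V := t'.image Subtype.val with ht
    have hts : t ⊆ s := by
      intro a ha
      obtain ⟨x, _, rfl⟩ := Finset.mem_image.1 ha
      exact_mod_cast x.2
    have htne : t.Nonempty := ht'ne.image _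
    have himg : Subtype.val '' ((t' : Finset ((s : Set V))) : Set ((s : Set V))) = (t : Set V) := by
      rw [ht, Finset.coe_image]
    have hiso : ((G.induce (s : Set V)).induce ((t' : Finset ((s : Set V))) : Set ((s : Set V))))
        ≃g G.induce (t : Set V) :=
      (induceInduceIso G (s : Set V) _).trans (induceSetCongr G himg)
    rw [enat_bound_iff, maxDegree_eq_of_iso hiso, chi_eq_of_iso hiso]
    exact h t hts htne

lemma upsilonMem_iff' (k : ℕ) :
    UpsilonMem k G ↔
      ∀ t : Finset V, t.Nonempty →
        (G.induce (t : Set V)).maxDegree + 1 ≤ chi (G.induce (t : Set V)) + k := by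
  constructor
  · intro h t htne
    have := h t htne
    rwa [enat_bound_iff] at this
  · intro h t htne
    rw [enat_bound_iff]
    exact h t htne

end Main
section Main2

variable {V : Type*} [Fintype V] (G : SimpleGraph V)

lemma chi_mono_subset {t s : Finset V} (h : t ⊆ s) :
    chi (G.induce (t : Set V)) ≤ chi (G.induce (s : Set V)) :=
  chi_le_of_embedding (induceSubsetEmb G (by exact_mod_cast h))

/-- If every optimal coloring of `G[T]` has all classes of size ≥ 2, removing a vertex
does not decrease the chromatic number. -/
lemma chi_erase_of_big (T : Finset V) (hbig : AllColorClassesBig (G.induce (T : Set V)))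
    (w : V) (hw : w ∈ T) :
    chi (G.induce (T : Set V)) ≤ chi (G.induce ((T.erase w : Finset V) : Set V)) := by
  by_contra hlt
  push_neg at hlt
  have hne : Nonempty ((T : Set V)) := ⟨⟨w, by exact_mod_cast hw⟩⟩
  have h1 : 1 ≤ chi (G.induce (T : Set V)) := chi_pos _
  obtain ⟨m, hm⟩ : ∃ m, chi (G.induce (T : Set V)) = m + 1 :=
    ⟨_, (Nat.succ_pred_eq_of_pos h1).symm⟩
  have hcol : (G.induce ((T.erase w : Finset V) : Set V)).Colorable m :=
    (chi_colorable _).mono (by omega)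
  obtain ⟨C⟩ := hcol
  set D : ((T : Set V)) → Fin (m + 1) := fun u => if h : u.val = w then Fin.last m
    else (C ⟨u.val, mem_erase_coe u.2 h⟩).castSucc with hD
  have hvalid : ∀ {a b : ((T : Set V))}, (G.induce (T : Set V)).Adj a b → D a ≠ D b := by
    rintro ⟨a, ha⟩ ⟨b, hb⟩ hab
    have hGab : G.Adj a b := hab
    rw [hD]
    dsimp only
    split_ifs with h1' h2' h2'
    · exact absurd hGab (by rw [h1', h2']; exact G.loopless.irrefl w)
    · intro hcc
      have h := (C ⟨b, mem_erase_coe hb h2'⟩).isLt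
      have h2 := congrArg Fin.val hcc
      simp at h2
      omega
    · intro hcc
      have h := (C ⟨a, mem_erase_coe ha h1'⟩).isLt
      have h2 := congrArg Fin.val hcc
      simp at h2
      omega
    · intro hcc
      have hadj : (G.induce ((T.erase w : Finset V) : Set V)).Adj
          ⟨a, mem_erase_coe ha h1'⟩ ⟨b, mem_erase_coe hb h2'⟩ := hGab
      exact C.valid hadj (by simpa [Fin.ext_iff] using hcc)
  have hmw : w ∈ (T : Set V) := by exact_mod_cast hw
  have hwit : D ⟨w, hmw⟩ = Fin.last m := by rw [hD]; simp
  have hcard := hbig (m + 1) ⟨D, hvalid⟩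
    (by rw [chi_spec]; exact_mod_cast hm.symm) (Fin.last m) ⟨⟨w, hmw⟩, hwit⟩
  have hsub : ∀ x : {u // (⟨D, hvalid⟩ : (G.induce (T : Set V)).Coloring (Fin (m+1))) u
      = Fin.last m}, x.1 = ⟨w, hmw⟩ := by
    rintro ⟨⟨a, ha⟩, hx⟩
    have hx' : D ⟨a, ha⟩ = Fin.last m := hx
    by_cases haw : a = w
    · exact Subtype.ext haw
    · exfalso
      rw [hD] at hx'
      simp only [haw, dif_neg, not_false_iff] at hx'
      have := (C ⟨a, mem_erase_coe ha haw⟩).isLt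
      have h2 := congrArg Fin.val hx'
      simp at h2
      omega
  have : Fintype.card {u // (⟨D, hvalid⟩ : (G.induce (T : Set V)).Coloring (Fin (m+1))) u
      = Fin.last m} ≤ 1 :=
    Fintype.card_le_one_iff.2 (fun x y => Subtype.ext ((hsub x).trans (hsub y).symm))
  omega

/-- Chromatic drop: removing `r ≥ 1` vertices from `T` decreases `χ` by at most `r - 1`,
provided all optimal colorings of `G[T]` have big classes. -/
lemma chi_drop (T : Finset V) (hbig : AllColorClassesBig (G.induce (T : Set V))) :
    ∀ (r : ℕ) (t : Finset V), t ⊆ T → t.card + r = T.card → 1 ≤ r →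
      chi (G.induce (T : Set V)) + t.card + 1 ≤ chi (G.induce (t : Set V)) + T.card := by
  intro r
  induction r with
  | zero => intro t _ _ h; omega
  | succ r ih =>
    intro t hts hcard _
    rcases Nat.eq_zero_or_pos r with hr | hr
    · subst hr
      -- t = T.erase w for some w
      obtain ⟨w, hwT, hwt⟩ : ∃ w ∈ T, w ∉ t := by
        by_contra hc
        push_neg at hc
        have : T ⊆ t := hc
        have := Finset.card_le_card this
        omega
      have hsub : t ⊆ T.erase w := fun x hx =>
        Finset.mem_erase.2 ⟨fun h => hwt (h ▸ hx), hts hx⟩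
      have hce : (T.erase w).card + 1 = T.card := Finset.card_erase_add_one hwT
      have heq : T.erase w = t := (Finset.eq_of_subset_of_card_le hsub (by omega)).symm
      have := chi_erase_of_big G T hbig w hwT
      rw [heq] at this
      omega
    · obtain ⟨w, hwT, hwt⟩ : ∃ w ∈ T, w ∉ t := by
        by_contra hc
        push_neg at hc
        have := Finset.card_le_card (show T ⊆ t from hc)
        omega
      set t1 := insert w t with ht1
      have ht1T : t1 ⊆ T := Finset.insert_subset hwT hts
      have ht1card : t1.card = t.card + 1 := Finset.card_insert_of_notMem hwt
      have hih := ih t1 ht1T (by omega) hr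
      have herase : t1.erase w = t := by
        rw [ht1, Finset.erase_insert hwt]
      have hle : chi (G.induce (t1 : Set V)) ≤ chi (G.induce (t : Set V)) + 1 := by
        have := chi_erase_le G t1 w
        rwa [herase] at this
      omega

end Main2
section Main3

variable {V : Type*} [Fintype V] (G : SimpleGraph V)

lemma card_coe_set (t : Finset V) : Fintype.card ((t : Set V)) = t.card := by
  rw [Fintype.card_congr (Equiv.subtypeEquivRight (fun x => Finset.mem_coe))]
  exact Fintype.card_coe t

lemma maxDegree_univ :
    (G.induce ((Finset.univ : Finset V) : Set V)).maxDegree = G.maxDegree :=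
  maxDegree_eq_of_iso ((induceSetCongr G (by simp)).trans (induceUnivIso G))

lemma chi_univ : chi (G.induce ((Finset.univ : Finset V) : Set V)) = chi G :=
  chi_eq_of_iso ((induceSetCongr G (by simp)).trans (induceUnivIso G))

lemma maxDegree_induce_lt_card (t : Finset V) (htne : t.Nonempty) :
    (G.induce (t : Set V)).maxDegree + 1 ≤ t.card := by
  haveI : Nonempty ((t : Set V)) := ⟨⟨htne.choose, by exact_mod_cast htne.choose_spec⟩⟩
  have := maxDegree_lt_card_verts (G.induce (t : Set V))
  rwa [card_coe_set, Nat.lt_iff_add_one_le] at this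

lemma backward_min (k : ℕ) (v : V) (hdom : IsDominatingVertex G v)
    (huniq : ∀ w, IsDominatingVertex G w → w = v)
    (hbig : AllColorClassesBig (G.induce ((Finset.univ.erase v : Finset V) : Set V)))
    (heq : G.maxDegree = chi G + k) : MinForbUpsilon k G := by
  haveI : Nonempty V := ⟨v⟩
  set n := Fintype.card V with hn
  set T := Finset.univ.erase v with hT
  have hTcard : T.card + 1 = n := by
    rw [hT, Finset.card_erase_add_one (Finset.mem_univ v), Finset.card_univ]
  have hdegv : G.degree v + 1 = n := degree_dominating G v hdom
  have hΔ : G.maxDegree + 1 = n := by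
    have h1 := degree_le_maxDegree G v
    have h2 := maxDegree_lt_card_verts G (V := V)
    omega
  have hχ : chi G = chi (G.induce (T : Set V)) + 1 := by
    have := chi_of_dominating G Finset.univ v (Finset.mem_univ v)
      (fun w _ hw => hdom w hw)
    rwa [chi_univ] at this
  have hbase : n = chi (G.induce (T : Set V)) + k + 2 := by omega
  have key : ∀ t : Finset V, t.Nonempty → t ≠ Finset.univ →
      (G.induce (t : Set V)).maxDegree + 1 ≤ chi (G.induce (t : Set V)) + k := by
    intro t htne htu
    by_cases hvt : v ∈ t
    · -- v ∈ t
      set t' := t.erase v with ht'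
      have ht'card : t'.card + 1 = t.card := Finset.card_erase_add_one hvt
      have hχt : chi (G.induce (t : Set V)) = chi (G.induce (t' : Set V)) + 1 :=
        chi_of_dominating G t v hvt (fun w hw hwv => hdom w hwv)
      have ht'T : t' ⊆ T := Finset.erase_subset_erase v (Finset.subset_univ t)
      have ht'ne : t' ≠ T := by
        intro h
        apply htu
        apply Finset.eq_univ_of_card
        have : T.card ≤ t'.card := h ▸ le_refl _
        have := Finset.card_le_card (Finset.subset_univ t)
        rw [← Finset.card_univ] at *
        omega
      have hlt : t'.card < T.card := Finset.card_lt_card (lt_of_le_of_ne ht'T ht'ne)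
      have hdrop := chi_drop G T hbig (T.card - t'.card) t' ht'T (by omega) (by omega)
      have hmd := maxDegree_induce_lt_card G t htne
      omega
    · -- v ∉ t
      have htT : t ⊆ T := fun x hx =>
        Finset.mem_erase.2 ⟨fun h => hvt (h ▸ hx), Finset.mem_univ x⟩
      by_cases htT' : t = T
      · have hchit : chi (G.induce (t : Set V)) = chi (G.induce (T : Set V)) := by
          rw [htT']
        haveI : Nonempty ((t : Set V)) := ⟨⟨htne.choose, by exact_mod_cast htne.choose_spec⟩⟩
        obtain ⟨u, hu⟩ := (G.induce (t : Set V)).exists_maximal_degree_vertex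
        have huv : u.1 ≠ v := fun h => hvt (by rw [← h]; exact_mod_cast u.2)
        have hadj : G.Adj u.1 v := (hdom u.1 huv).symm
        have hd1 : (G.induce (t : Set V)).degree u + 1 ≤ G.degree u.1 := by
          have hvnt : v ∉ t := by rw [htT']; exact Finset.notMem_erase v Finset.univ
          have := degree_induce_lt G t u.1 u.2 v hvnt hadj
          convert this using 2
        have hd2 : G.degree u.1 + 2 ≤ n := by
          apply degree_not_dominating
          intro hdomu
          exact huv (huniq u.1 hdomu)
        omega
      · have hlt : t.card < T.card := Finset.card_lt_card (lt_of_le_of_ne htT htT')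
        have hdrop := chi_drop G T hbig (T.card - t.card) t htT (by omega) (by omega)
        have hmd := maxDegree_induce_lt_card G t htne
        omega
  constructor
  · rw [upsilonMem_iff']
    push_neg
    refine ⟨Finset.univ, Finset.univ_nonempty, ?_⟩
    rw [maxDegree_univ, chi_univ]
    omega
  · intro s hs
    rw [upsilonMem_iff_aux]
    intro t hts htne
    have htu : t ≠ Finset.univ := by
      intro h
      exact hs (Finset.univ_subset_iff.1 (h ▸ hts))
    exact key t htne htu

end Main3

lemma allBig_of_iso {A B : Type*} [Fintype A] [Fintype B] {G1 : SimpleGraph A}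
    {G2 : SimpleGraph B} (e : G1 ≃g G2) (h : AllColorClassesBig G1) :
    AllColorClassesBig G2 := by
  intro n C hn c hex
  have hchrom : G1.chromaticNumber = G2.chromaticNumber :=
    le_antisymm (chromaticNumber_mono_of_hom e.toEmbedding.toHom)
      (chromaticNumber_mono_of_hom e.symm.toEmbedding.toHom)
  obtain ⟨u, hu⟩ := hex
  have h2 := h n (C.comp e.toHom) (hn.trans hchrom.symm) c
    ⟨e.symm u, by simp [hu]⟩
  have hcard : Fintype.card {a // (C.comp e.toHom) a = c} = Fintype.card {b // C b = c} :=
    Fintype.card_congr (Equiv.subtypeEquiv e.toEquiv (fun a => Iff.rfl))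
  rw [hcard] at h2
  exact h2

section Main4

variable {V : Type*} [Fintype V] (G : SimpleGraph V)

lemma forward_min (k : ℕ) (h : MinForbUpsilon k G) :
    ∃ v : V, IsDominatingVertex G v ∧ (∀ w, IsDominatingVertex G w → w = v) ∧
      AllColorClassesBig (G.induce ((Finset.univ.erase v : Finset V) : Set V)) ∧
      G.maxDegree = chi G + k := by
  obtain ⟨hnot, hmin⟩ := h
  have key : ∀ t : Finset V, t ≠ Finset.univ → t.Nonempty →
      (G.induce (t : Set V)).maxDegree + 1 ≤ chi (G.induce (t : Set V)) + k := by
    intro t ht htne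
    exact (upsilonMem_iff_aux G k t).1 (hmin t ht) t (le_refl _) htne
  rw [upsilonMem_iff'] at hnot
  push_neg at hnot
  obtain ⟨s, hsne, hslt⟩ := hnot
  have hsu : s = Finset.univ := by
    by_contra hne
    have := key s hne hsne
    omega
  subst hsu
  rw [maxDegree_univ, chi_univ] at hslt
  -- so χ(G) + k ≤ Δ(G)
  have hG : chi G + k + 1 ≤ G.maxDegree + 1 := by omega
  haveI : Nonempty V := by
    obtain ⟨a, _⟩ := hsne; exact ⟨a⟩
  set n := Fintype.card V with hn
  have hn1 : 1 ≤ n := Fintype.card_pos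
  have hn2 : 2 ≤ n := by
    by_contra hc
    have hsub : n = 1 := by omega
    have hΔ := maxDegree_lt_card_verts G (V := V)
    have hχ := chi_pos G
    omega
  obtain ⟨v, hvdeg⟩ := G.exists_maximal_degree_vertex
  have hdom : IsDominatingVertex G v := by
    intro w hwv
    by_contra hnadj
    set t := Finset.univ.erase w with ht
    have htu : t ≠ Finset.univ := by
      intro h
      have : w ∈ t := h ▸ Finset.mem_univ w
      exact Finset.notMem_erase w _ this
    have hvt : v ∈ t := Finset.mem_erase.2 ⟨fun h => hwv h.symm, Finset.mem_univ v⟩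
    have hvt' : v ∈ (t : Set V) := by exact_mod_cast hvt
    have hnb : G.neighborFinset v ⊆ t := by
      intro x hx
      rw [mem_neighborFinset] at hx
      refine Finset.mem_erase.2 ⟨?_, Finset.mem_univ x⟩
      rintro rfl
      exact hnadj hx
    have hdeq : (G.induce (t : Set V)).degree ⟨v, hvt'⟩ = G.degree v :=
      degree_induce_eq G t v hvt' hnb
    have hdle := degree_le_maxDegree (G.induce (t : Set V)) ⟨v, hvt'⟩
    have hchit : chi (G.induce (t : Set V)) ≤ chi G := by
      have := chi_mono_subset G (Finset.subset_univ t)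
      rwa [chi_univ] at this
    have := key t htu ⟨v, hvt⟩
    omega
  have hdegv : G.degree v + 1 = n := degree_dominating G v hdom
  have hΔ : G.maxDegree + 1 = n := by
    have := maxDegree_lt_card_verts G (V := V)
    omega
  set T := Finset.univ.erase v with hT
  have hTcard : T.card + 1 = n := by
    rw [hT, Finset.card_erase_add_one (Finset.mem_univ v), Finset.card_univ]
  have hχ : chi G = chi (G.induce (T : Set V)) + 1 := by
    have := chi_of_dominating G Finset.univ v (Finset.mem_univ v)
      (fun w _ hw => hdom w hw)
    rwa [chi_univ] at this
  -- helper: violation from big max degree subgraphs containing v obtained by erasing u ≠ v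
  have herase : ∀ u : V, u ≠ v →
      n ≤ chi (G.induce ((Finset.univ.erase u : Finset V) : Set V)) + k + 1 := by
    intro u huv
    set t := Finset.univ.erase u with ht
    have htu : t ≠ Finset.univ := by
      intro h
      have : u ∈ t := h ▸ Finset.mem_univ u
      exact Finset.notMem_erase u _ this
    have hvt : v ∈ t := Finset.mem_erase.2 ⟨huv.symm, Finset.mem_univ v⟩
    have hvt' : v ∈ (t : Set V) := by exact_mod_cast hvt
    have htcard : t.card + 1 = n := by
      rw [ht, Finset.card_erase_add_one (Finset.mem_univ u), Finset.card_univ]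
    have hdomt : (G.induce (t : Set V)).degree ⟨v, hvt'⟩ + 1 = t.card :=
      degree_induce_dominating G t v hvt' (fun w _ hwv => hdom w hwv)
    have hdle := degree_le_maxDegree (G.induce (t : Set V)) ⟨v, hvt'⟩
    have := key t htu ⟨v, hvt⟩
    omega
  have hΔeq : G.maxDegree = chi G + k := by
    obtain ⟨u, huv⟩ := Fintype.exists_ne_of_one_lt_card (by omega) v
    have h1 := herase u huv
    have h2 : chi (G.induce ((Finset.univ.erase u : Finset V) : Set V)) ≤ chi G := by
      have := chi_mono_subset G (Finset.subset_univ (Finset.univ.erase u))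
      rwa [chi_univ] at this
    omega
  have hbig : AllColorClassesBig (G.induce (T : Set V)) := by
    intro n₀ C hn₀ cl hex
    by_contra hlt
    push_neg at hlt
    obtain ⟨u₀, hu₀⟩ := hex
    have hall : ∀ x, C x = cl → x = u₀ := by
      intro x hx
      have hc1 : Fintype.card {u // C u = cl} ≤ 1 := by omega
      have := Fintype.card_le_one_iff.1 hc1 ⟨x, hx⟩ ⟨u₀, hu₀⟩
      exact congrArg Subtype.val this
    have hn₀' : n₀ = chi (G.induce (T : Set V)) := by
      rw [chi_spec] at hn₀
      exact_mod_cast hn₀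
    have huv : u₀.1 ≠ v := ne_of_mem_erase_coe u₀.2
    set t := Finset.univ.erase u₀.1 with ht
    -- build a coloring of G[t] with n₀ colors
    have hmemT : ∀ x : ((t : Set V)), x.1 ≠ v → x.1 ∈ (T : Set V) := by
      intro x hx
      rw [hT]
      exact mem_erase_coe (by simp) hx
    have hcol : (G.induce (t : Set V)).Colorable n₀ := by
      refine ⟨⟨fun x => if h : x.1 = v then cl else C ⟨x.1, hmemT x h⟩, ?_⟩⟩
      rintro ⟨a, ha⟩ ⟨b, hb⟩ hab
      have hGab : G.Adj a b := hab
      dsimp only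
      split_ifs with h1 h2 h2
      · exact absurd hGab (by rw [h1, h2]; exact G.loopless.irrefl v)
      · intro hcc
        have := hall _ hcc.symm
        have hbu : b = u₀.1 := congrArg Subtype.val this
        exact ne_of_mem_erase_coe hb hbu
      · intro hcc
        have := hall _ hcc
        have hau : a = u₀.1 := congrArg Subtype.val this
        exact ne_of_mem_erase_coe ha hau
      · intro hcc
        have hadj : (G.induce (T : Set V)).Adj ⟨a, hmemT ⟨a, ha⟩ h1⟩ ⟨b, hmemT ⟨b, hb⟩ h2⟩ := hGab
        exact C.valid hadj hcc
    have hchit : chi (G.induce (t : Set V)) ≤ n₀ := chi_le hcol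
    have h1 := herase u₀.1 huv
    rw [← ht] at h1
    omega
  refine ⟨v, hdom, ?_, hbig, hΔeq⟩
  intro w hdomw
  by_contra hwv
  have hwT : w ∈ (T : Set V) := by
    rw [hT]; exact mem_erase_coe (by simp) hwv
  obtain ⟨C⟩ := chi_colorable (G.induce (T : Set V))
  have h2 := hbig (chi (G.induce (T : Set V))) C (chi_spec _).symm (C ⟨w, hwT⟩) ⟨⟨w, hwT⟩, rfl⟩
  have hsub : ∀ x : {u // C u = C ⟨w, hwT⟩}, x.1 = ⟨w, hwT⟩ := by
    rintro ⟨⟨a, ha⟩, hx⟩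
    by_contra hne'
    have haw : a ≠ w := by
      intro h
      apply hne'
      exact Subtype.ext h
    have hadj : (G.induce (T : Set V)).Adj ⟨w, hwT⟩ ⟨a, ha⟩ := hdomw a haw
    exact C.valid hadj hx.symm
  have : Fintype.card {u // C u = C ⟨w, hwT⟩} ≤ 1 :=
    Fintype.card_le_one_iff.2 (fun x y => Subtype.ext ((hsub x).trans (hsub y).symm))
  omega

end Main4

theorem minForbUpsilon_iff (k : ℕ) {V : Type*} [Fintype V] (G : SimpleGraph V) :
    MinForbUpsilon k G ↔
      (∃ v : V, IsDominatingVertex G v ∧ (∀ w, IsDominatingVertex G w → w = v) ∧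
          AllColorClassesBig (G.induce ({v}ᶜ : Set V))) ∧
        (G.maxDegree : ℕ∞) = G.chromaticNumber + (k : ℕ∞) := by
  constructor
  · intro h
    obtain ⟨v, hdom, huniq, hbig, heq⟩ := forward_min G k h
    refine ⟨⟨v, hdom, huniq, ?_⟩, ?_⟩
    · exact allBig_of_iso (induceSetCongr G
        (by simp [Finset.coe_erase, Set.compl_eq_univ_diff] :
          (((Finset.univ.erase v : Finset V) : Set V)) = ({v}ᶜ : Set V))) hbig
    · rw [chi_spec]; exact_mod_cast heq
  · rintro ⟨⟨v, hdom, huniq, hbig⟩, heq⟩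
    apply backward_min G k v hdom huniq
    · exact allBig_of_iso (induceSetCongr G
        (by simp [Finset.coe_erase, Set.compl_eq_univ_diff] :
          ({v}ᶜ : Set V) = (((Finset.univ.erase v : Finset V) : Set V)))) hbig
    · rw [chi_spec] at heq; exact_mod_cast heq
end

section
/- For every k ∈ ℕ₀, the set of minimal forbidden induced subgraphs of Υ_k is finite (up to isomorphism), since each such graph has at most 2k + 3 vertices. -/
open SimpleGraph

attribute [local instance] Classical.propDecidable

set_option linter.unnecessarySeqFocus false

section Aux
variable {V W : Type*}

lemma myDegreeIso {G : SimpleGraph V} {G' : SimpleGraph W} [Fintype V] [Fintype W]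
    [DecidableRel G.Adj] [DecidableRel G'.Adj]
    (f : G ≃g G') (v : V) : G.degree v = G'.degree (f v) := by
  rw [← card_neighborSet_eq_degree, ← card_neighborSet_eq_degree]
  exact Fintype.card_congr (f.mapNeighborSet v)

lemma myMaxDegreeIso {G : SimpleGraph V} {G' : SimpleGraph W} [Fintype V] [Fintype W]
    [DecidableRel G.Adj] [DecidableRel G'.Adj]
    (f : G ≃g G') : G.maxDegree = G'.maxDegree := by
  apply le_antisymm
  · apply maxDegree_le_of_forall_degree_le
    intro v
    rw [myDegreeIso f v]
    exact degree_le_maxDegree _ _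
  · apply maxDegree_le_of_forall_degree_le
    intro w
    rw [myDegreeIso f.symm w]
    exact degree_le_maxDegree _ _

lemma myChromLeEmb {G : SimpleGraph V} {G' : SimpleGraph W}
    (f : G ↪g G') : G.chromaticNumber ≤ G'.chromaticNumber := by
  by_cases h : G'.chromaticNumber = ⊤
  · simp [h]
  · lift G'.chromaticNumber to ℕ using h with n hn
    rw [chromaticNumber_le_iff_colorable]
    exact Colorable.of_hom f.toHom (chromaticNumber_le_iff_colorable.mp hn.ge)

lemma myChromIso {G : SimpleGraph V} {G' : SimpleGraph W}
    (f : G ≃g G') : G.chromaticNumber = G'.chromaticNumber :=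
  le_antisymm (myChromLeEmb f.toEmbedding) (myChromLeEmb f.symm.toEmbedding)

/-- iso of induced subgraphs -/
noncomputable def myIsoInduce {G : SimpleGraph V} {G' : SimpleGraph W} (f : G ≃g G') (s : Set V) :
    G.induce s ≃g G'.induce (f '' s) where
  toEquiv := Equiv.Set.image f s f.toEquiv.injective
  map_rel_iff' := by
    rintro ⟨a, ha⟩ ⟨b, hb⟩
    simp [Equiv.Set.image, Equiv.Set.imageOfInjOn]
    exact f.map_adj_iff

lemma myChromNeTop (G : SimpleGraph V) [Fintype V] : G.chromaticNumber ≠ ⊤ :=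
  (lt_of_le_of_lt (G.colorable_of_fintype).chromaticNumber_le (WithTop.coe_lt_top _)).ne

lemma myUpsilonIso {k : ℕ} {G : SimpleGraph V} {G' : SimpleGraph W} [Fintype V] [Fintype W]
    (f : G ≃g G') (h : UpsilonMem k G) : UpsilonMem k G' := by
  intro s hs
  have ht : (Finset.image (⇑f.symm) s).Nonempty := hs.image _
  have h1 := h _ ht
  have hco : ⇑f '' ((Finset.image (⇑f.symm) s : Finset V) : Set V) = (s : Set W) := by
    ext w
    simp only [Finset.coe_image, Set.image_image, RelIso.coe_fn_toEquiv]
    simp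
  have e : G.induce ((Finset.image (⇑f.symm) s : Finset V) : Set V) ≃g G'.induce (s : Set W) := by
    rw [← hco]
    exact myIsoInduce f _
  rwa [myMaxDegreeIso e, myChromIso e] at h1

lemma myUpsilonSelf {U : Type*} {k : ℕ} {H : SimpleGraph U} [Fintype U] [Nonempty U]
    (h : UpsilonMem k H) : (H.maxDegree + 1 : ℕ∞) ≤ H.chromaticNumber + k := by
  have h1 := h Finset.univ Finset.univ_nonempty
  have e : H.induce ((Finset.univ : Finset U) : Set U) ≃g H := by
    rw [Finset.coe_univ]; exact induceUnivIso H
  rwa [myMaxDegreeIso e, myChromIso e] at h1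

lemma myDegreeInduce {G : SimpleGraph V} [Fintype V] (s : Set V) [Fintype s] (v : V) (hv : v ∈ s) :
    (G.induce s).degree ⟨v, hv⟩ = Nat.card {w : V // G.Adj v w ∧ w ∈ s} := by
  rw [← card_neighborSet_eq_degree, ← Nat.card_eq_fintype_card]
  apply Nat.card_congr
  exact ⟨fun x => ⟨x.1.1, x.2, x.1.2⟩, fun w => ⟨⟨w.1, w.2.2⟩, w.2.1⟩,
    fun x => rfl, fun w => rfl⟩

lemma myDegreeInduceFull {G : SimpleGraph V} [Fintype V] (s : Set V) [Fintype s] (v : V) (hv : v ∈ s)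
    (hsub : G.neighborSet v ⊆ s) : (G.induce s).degree ⟨v, hv⟩ = G.degree v := by
  rw [myDegreeInduce, ← card_neighborSet_eq_degree, ← Nat.card_eq_fintype_card]
  apply Nat.card_congr
  exact ⟨fun w => ⟨w.1, w.2.1⟩, fun w => ⟨w.1, w.2, hsub w.2⟩, fun _ => rfl, fun _ => rfl⟩

lemma myDegreeInduceErase {G : SimpleGraph V} [Fintype V] (v u : V) (hadj : G.Adj v u)
    (hv : v ∈ ((Finset.univ.erase u : Finset V) : Set V)) :
    (G.induce ((Finset.univ.erase u : Finset V) : Set V)).degree ⟨v, hv⟩ = G.degree v - 1 := by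
  rw [myDegreeInduce]
  have h1 : ∀ w : V, (G.Adj v w ∧ w ∈ ((Finset.univ.erase u : Finset V) : Set V)) ↔
      w ∈ (G.neighborFinset v).erase u := by
    intro w
    simp [and_comm]
  rw [Nat.card_congr (Equiv.subtypeEquivRight h1), Nat.card_eq_finsetCard,
    Finset.card_erase_of_mem (by simpa using hadj)]
  rfl

lemma myColorableOfMiss {U : Type*} {H : SimpleGraph U} {m : ℕ} (C : H.Coloring (Fin m)) (i : Fin m)
    (hmiss : ∀ w, C w ≠ i) : H.Colorable (m - 1) := by
  have C' : H.Coloring {j : Fin m // ¬ (j = i)} :=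
    Coloring.mk (fun w => ⟨C w, hmiss w⟩) (fun hab => by simpa [Subtype.ext_iff] using C.valid hab)
  have h2 := C'.colorable
  rwa [Fintype.card_subtype_compl, Fintype.card_subtype_eq, Fintype.card_fin] at h2

lemma myCardBound {k : ℕ} {V : Type*} [Fintype V] {G : SimpleGraph V}
    (hG : MinForbUpsilon k G) : Fintype.card V ≤ 2 * k + 3 := by
  have hne : Nonempty V := by
    by_contra h
    rw [not_nonempty_iff] at h
    exact hG.1 (fun s hs => (IsEmpty.false hs.choose).elim)
  -- every proper induced subgraph satisfies the inequality
  have key : ∀ s : Finset V, s ≠ Finset.univ → s.Nonempty →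
      ((G.induce (s : Set V)).maxDegree + 1 : ℕ∞) ≤
        (G.induce (s : Set V)).chromaticNumber + k := by
    intro s hs hsne
    haveI : Nonempty (s : Set V) := ⟨⟨hsne.choose, hsne.choose_spec⟩⟩
    exact myUpsilonSelf (hG.2 s hs)
  -- the whole graph violates the inequality
  have hGfail : ¬ ((G.maxDegree + 1 : ℕ∞) ≤ G.chromaticNumber + k) := by
    intro hle
    apply hG.1
    intro s hsne
    by_cases hs : s = Finset.univ
    · subst hs
      have e : G.induce ((Finset.univ : Finset V) : Set V) ≃g G := by
        rw [Finset.coe_univ]; exact induceUnivIso G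
      rw [myMaxDegreeIso e, myChromIso e]
      exact hle
    · exact key s hs hsne
  set d := G.maxDegree with hd
  set c := G.chromaticNumber.toNat with hcdef
  have hc : G.chromaticNumber = (c : ℕ∞) := (ENat.coe_toNat (myChromNeTop G)).symm
  have hckd : c + k ≤ d := by
    rw [not_le, hc] at hGfail
    have : c + k < d + 1 := by exact_mod_cast hGfail
    omega
  obtain ⟨v, hvd⟩ := G.exists_maximal_degree_vertex
  have hcpos : 1 ≤ c := by
    rcases Nat.eq_zero_or_pos c with h0 | h1
    · exfalso
      have : G.chromaticNumber = 0 := by rw [hc, h0]; rfl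
      exact (isEmpty_of_chromaticNumber_eq_zero this).false hne.some
    · exact h1
  -- v is dominating
  have hdom : ∀ w, w ≠ v → G.Adj v w := by
    intro w hw
    by_contra hadj
    have hsu : Finset.univ.erase w ≠ Finset.univ := fun h => by
      simpa [h] using Finset.notMem_erase w Finset.univ
    have hvs : v ∈ ((Finset.univ.erase w : Finset V) : Set V) := by
      simp [Ne.symm hw]
    have h1 := key _ hsu ⟨v, Finset.mem_erase.mpr ⟨Ne.symm hw, Finset.mem_univ v⟩⟩
    have hsub : G.neighborSet v ⊆ ((Finset.univ.erase w : Finset V) : Set V) := by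
      intro x hx
      have hxw : x ≠ w := by rintro rfl; exact hadj hx
      simp [hxw]
    have hdeg : (G.induce ((Finset.univ.erase w : Finset V) : Set V)).degree ⟨v, hvs⟩ = d := by
      rw [myDegreeInduceFull _ _ hvs hsub]
      exact hvd.symm
    have hΔ : d ≤ (G.induce ((Finset.univ.erase w : Finset V) : Set V)).maxDegree := by
      rw [← hdeg]
      exact degree_le_maxDegree _ _
    have hcH : (G.induce ((Finset.univ.erase w : Finset V) : Set V)).chromaticNumber =
        ((G.induce ((Finset.univ.erase w : Finset V) : Set V)).chromaticNumber.toNat : ℕ∞) :=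
      (ENat.coe_toNat (myChromNeTop _)).symm
    rw [hcH] at h1
    have h1' : (G.induce ((Finset.univ.erase w : Finset V) : Set V)).maxDegree + 1 ≤
        (G.induce ((Finset.univ.erase w : Finset V) : Set V)).chromaticNumber.toNat + k := by
      exact_mod_cast h1
    have hχle : (G.induce ((Finset.univ.erase w : Finset V) : Set V)).chromaticNumber.toNat ≤ c := by
      have := myChromLeEmb (Embedding.induce ((Finset.univ.erase w : Finset V) : Set V) (G := G))
      rw [hcH, hc, Nat.cast_le] at this
      exact this
    omega
  -- degree of v is card V - 1
  have hNv : G.neighborFinset v = Finset.univ.erase v := by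
    ext w
    simp only [mem_neighborFinset, Finset.mem_erase, Finset.mem_univ, and_true]
    exact ⟨fun h => (G.ne_of_adj h).symm, fun h => hdom w h⟩
  have hdval : d = Fintype.card V - 1 := by
    rw [hd, hvd]
    show (G.neighborFinset v).card = _
    rw [hNv, Finset.card_erase_of_mem (Finset.mem_univ v), Finset.card_univ]
  have hcard1 : 1 ≤ Fintype.card V := Fintype.card_pos
  have hcard : Fintype.card V = d + 1 := by omega
  -- removing any vertex u ≠ v
  have hstep : ∀ u : V, u ≠ v →
      d ≤ (G.induce ((Finset.univ.erase u : Finset V) : Set V)).chromaticNumber.toNat + k ∧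
      (G.induce ((Finset.univ.erase u : Finset V) : Set V)).chromaticNumber.toNat ≤ c := by
    intro u hu
    have hadj : G.Adj v u := hdom u hu
    have hsu : Finset.univ.erase u ≠ Finset.univ := fun h => by
      simpa [h] using Finset.notMem_erase u Finset.univ
    have hvs : v ∈ ((Finset.univ.erase u : Finset V) : Set V) := by
      simp [Ne.symm hu]
    have h1 := key _ hsu ⟨v, Finset.mem_erase.mpr ⟨Ne.symm hu, Finset.mem_univ v⟩⟩
    have hdeg : (G.induce ((Finset.univ.erase u : Finset V) : Set V)).degree ⟨v, hvs⟩ = d - 1 := by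
      rw [myDegreeInduceErase v u hadj hvs, hd, hvd]
    have hΔ : d - 1 ≤ (G.induce ((Finset.univ.erase u : Finset V) : Set V)).maxDegree := by
      rw [← hdeg]
      exact degree_le_maxDegree _ _
    have hcH : (G.induce ((Finset.univ.erase u : Finset V) : Set V)).chromaticNumber =
        ((G.induce ((Finset.univ.erase u : Finset V) : Set V)).chromaticNumber.toNat : ℕ∞) :=
      (ENat.coe_toNat (myChromNeTop _)).symm
    rw [hcH] at h1
    have h1' : (G.induce ((Finset.univ.erase u : Finset V) : Set V)).maxDegree + 1 ≤
        (G.induce ((Finset.univ.erase u : Finset V) : Set V)).chromaticNumber.toNat + k := by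
      exact_mod_cast h1
    have hχle : (G.induce ((Finset.univ.erase u : Finset V) : Set V)).chromaticNumber.toNat ≤ c := by
      have := myChromLeEmb (Embedding.induce ((Finset.univ.erase u : Finset V) : Set V) (G := G))
      rw [hcH, hc, Nat.cast_le] at this
      exact this
    constructor
    · omega
    · exact hχle
  -- d = c + k
  have hucard : 2 ≤ Fintype.card V := by omega
  obtain ⟨u₀, hu₀⟩ := Fintype.exists_ne_of_one_lt_card (by omega) v
  have hdck : d = c + k := by
    have := hstep u₀ hu₀
    omega
  -- no small coloring of G - u
  have huncol : ∀ u : V, u ≠ v →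
      ¬ (G.induce ((Finset.univ.erase u : Finset V) : Set V)).Colorable (c - 1) := by
    intro u hu hcol
    have h1 := (hstep u hu).1
    have h2 := (hstep u hu).2
    have h3 := hcol.chromaticNumber_le
    set H := G.induce ((Finset.univ.erase u : Finset V) : Set V)
    have hcH : H.chromaticNumber = (H.chromaticNumber.toNat : ℕ∞) :=
      (ENat.coe_toNat (myChromNeTop H)).symm
    rw [hcH, Nat.cast_le] at h3
    omega
  -- an optimal coloring of G
  have hcol : G.Colorable c := G.colorable_chromaticNumber_of_fintype
  obtain ⟨C⟩ := hcol
  set fib : Fin c → Finset V := fun i => Finset.univ.filter (fun w => C w = i) with hfib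
  have hfibv : fib (C v) = {v} := by
    ext w
    simp only [hfib, Finset.mem_filter, Finset.mem_univ, true_and, Finset.mem_singleton]
    constructor
    · intro hCw
      by_contra hwv
      exact C.valid (hdom w hwv) hCw.symm
    · rintro rfl; rfl
  have hfibne : ∀ i : Fin c, (fib i).Nonempty := by
    intro i
    by_contra hcon
    rw [Finset.not_nonempty_iff_eq_empty, hfib, Finset.filter_eq_empty_iff] at hcon
    have hmiss : ∀ w, C w ≠ i := fun w => hcon (Finset.mem_univ w)
    have := (myColorableOfMiss C i hmiss).chromaticNumber_le
    rw [hc, Nat.cast_le] at this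
    omega
  have hfib2 : ∀ i : Fin c, i ≠ C v → 2 ≤ (fib i).card := by
    intro i hi
    by_contra hcon
    obtain ⟨u, hu⟩ := hfibne i
    have hCu : C u = i := (Finset.mem_filter.mp hu).2
    have huv : u ≠ v := by rintro rfl; exact hi hCu.symm
    have hone : fib i = {u} := by
      have h1 : (fib i).card = 1 := by
        have := Finset.card_pos.mpr (hfibne i)
        omega
      obtain ⟨a, ha⟩ := Finset.card_eq_one.mp h1
      rw [ha] at hu ⊢
      rw [Finset.mem_singleton.mp hu]
    -- coloring of G - u missing color i
    refine huncol u huv (myColorableOfMiss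
      (Coloring.mk (fun w : ((Finset.univ.erase u : Finset V) : Set V) => C w.1)
        (fun {a b} hab => C.valid hab)) i ?_)
    rintro ⟨w, hw⟩ hDw
    have hCw : C w = i := hDw
    have : w ∈ fib i := Finset.mem_filter.mpr ⟨Finset.mem_univ w, hCw⟩
    rw [hone, Finset.mem_singleton] at this
    subst this
    simp at hw
  -- counting
  have hsum : Fintype.card V = ∑ i : Fin c, (fib i).card := by
    rw [← Finset.card_univ]
    exact Finset.card_eq_sum_card_fiberwise (fun x _ => Finset.mem_univ (C x))
  have hsplit : (fib (C v)).card + ∑ i ∈ Finset.univ.erase (C v), (fib i).card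
      = ∑ i : Fin c, (fib i).card :=
    Finset.add_sum_erase Finset.univ (fun i => (fib i).card) (Finset.mem_univ (C v))
  have hlow : (Finset.univ.erase (C v)).card • 2 ≤ ∑ i ∈ Finset.univ.erase (C v), (fib i).card :=
    Finset.card_nsmul_le_sum _ _ _ (fun i hi => hfib2 i (Finset.ne_of_mem_erase hi))
  have hec : (Finset.univ.erase (C v)).card = c - 1 := by
    rw [Finset.card_erase_of_mem (Finset.mem_univ _), Finset.card_univ, Fintype.card_fin]
  rw [hec, smul_eq_mul] at hlow
  rw [hfibv, Finset.card_singleton] at hsplit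
  omega
end Aux

lemma myMinForbIso {k : ℕ} {V W : Type*} [Fintype V] [Fintype W] {G : SimpleGraph V}
    {G' : SimpleGraph W} (f : G ≃g G') (h : MinForbUpsilon k G) : MinForbUpsilon k G' := by
  constructor
  · intro h'
    exact h.1 (myUpsilonIso f.symm h')
  · intro s hs
    have ht : (s.image ⇑f.symm) ≠ Finset.univ := by
      intro hteq
      apply hs
      apply Finset.eq_univ_iff_forall.mpr
      intro w
      have hmem : f.symm w ∈ s.image ⇑f.symm := hteq ▸ Finset.mem_univ _
      obtain ⟨x, hx, hxe⟩ := Finset.mem_image.mp hmem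
      rwa [← f.symm.toEquiv.injective hxe]
    have h2 := h.2 _ ht
    have hco : ⇑f '' ((Finset.image (⇑f.symm) s : Finset V) : Set V) = (s : Set W) := by
      ext w
      simp only [Finset.coe_image, Set.image_image, RelIso.coe_fn_toEquiv]
      simp
    have e : G.induce ((Finset.image (⇑f.symm) s : Finset V) : Set V) ≃g
        G'.induce (s : Set W) := by
      rw [← hco]
      exact myIsoInduce f _
    exact myUpsilonIso e h2

theorem minForbUpsilon_finite (k : ℕ) :
    {p : Σ n : Fin (2 * k + 4), SimpleGraph (Fin n) | MinForbUpsilon k p.2}.Finite ∧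
      ∀ (V : Type) [Fintype V] (G : SimpleGraph V), MinForbUpsilon k G →
        ∃ p : Σ n : Fin (2 * k + 4), SimpleGraph (Fin n),
          MinForbUpsilon k p.2 ∧ Nonempty (G ≃g p.2) := by
  constructor
  · exact Set.toFinite _
  · intro V _ G hG
    have hb := myCardBound hG
    have hlt : Fintype.card V < 2 * k + 4 := by omega
    let e := Fintype.equivFin V
    exact ⟨⟨⟨Fintype.card V, hlt⟩, SimpleGraph.map e.toEmbedding G⟩,
      myMinForbIso (SimpleGraph.Iso.map e G) hG, ⟨SimpleGraph.Iso.map e G⟩⟩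
end

section
/- Let G be a perfect graph. The intersection of all maximum cliques of G is empty if and only if in every optimal proper coloring of G, every color class consists of at least two vertices. -/
open SimpleGraph

attribute [local instance] Classical.propDecidable

set_option linter.unnecessarySeqFocus false

lemma aux_isNClique_map {α β : Type*} {G : SimpleGraph α} {H : SimpleGraph β}
    (f : G ↪g H) {n : ℕ} {s : Finset α} (hs : G.IsNClique n s) :
    H.IsNClique n (s.map f.toEmbedding) := by
  constructor
  · rw [Finset.coe_map]
    rintro a ha b hb hab
    obtain ⟨a', ha', rfl⟩ := ha
    obtain ⟨b', hb', rfl⟩ := hb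
    exact f.map_adj_iff.mpr (hs.1 ha' hb' (fun e => hab (by rw [e])))
  · rw [Finset.card_map, hs.2]

lemma aux_cliqueNum_le {α β : Type*} [Fintype α] [Fintype β] {G : SimpleGraph α}
    {H : SimpleGraph β} (f : G ↪g H) : G.cliqueNum ≤ H.cliqueNum := by
  obtain ⟨s, hs⟩ := G.exists_isNClique_cliqueNum
  have := aux_isNClique_map f hs
  have hle := IsClique.card_le_cliqueNum (G := H) (tc := this.1)
  rwa [Finset.card_map, hs.2] at hle

lemma aux_perfect_self {V : Type*} [Fintype V] {G : SimpleGraph V} (h : IsPerfect G) :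
    (G.cliqueNum : ℕ∞) = G.chromaticNumber := by
  have hu := h Finset.univ
  rw [Finset.coe_univ] at hu
  have e := G.induceUnivIso
  have h1 : (G.induce Set.univ).cliqueNum = G.cliqueNum :=
    le_antisymm (aux_cliqueNum_le e.toEmbedding) (aux_cliqueNum_le e.symm.toEmbedding)
  have h2 : (G.induce Set.univ).chromaticNumber = G.chromaticNumber :=
    le_antisymm (chromaticNumber_mono_of_hom e.toEmbedding.toHom)
      (chromaticNumber_mono_of_hom e.symm.toEmbedding.toHom)
  rw [← h1, ← h2] at *
  exact hu

theorem perfect_maxCliques_inter_empty_iff {V : Type*} [Fintype V]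
    (G : SimpleGraph V) (h : IsPerfect G) :
    (¬ ∃ v : V, ∀ t : Finset V, G.IsNClique G.cliqueNum t → v ∈ t) ↔
      AllColorClassesBig G := by
  have hωχ : (G.cliqueNum : ℕ∞) = G.chromaticNumber := aux_perfect_self h
  constructor
  · -- intersection empty → all color classes big
    intro hne n C hn c hc
    by_contra hlt
    push_neg at hlt
    obtain ⟨v, hv⟩ := hc
    apply hne
    refine ⟨v, fun t ht => ?_⟩
    have hωn : G.cliqueNum = n := by
      have : (G.cliqueNum : ℕ∞) = (n : ℕ∞) := hωχ.trans hn.symm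
      exact_mod_cast this
    have hinj : Set.InjOn C ↑t := by
      intro a ha b hb hab
      by_contra hne'
      exact (C.valid (ht.1 ha hb hne')) hab
    have himg : (t.image C).card = n := by
      rw [Finset.card_image_of_injOn hinj, ht.2, hωn]
    have huniv : t.image C = Finset.univ :=
      Finset.eq_univ_of_card _ (by rw [himg, Fintype.card_fin])
    have hcmem : c ∈ t.image C := huniv ▸ Finset.mem_univ c
    obtain ⟨u, hu, huc⟩ := Finset.mem_image.mp hcmem
    have hcard1 : Fintype.card {x // C x = c} ≤ 1 := by omega
    have huv : u = v := by
      have h1 : (⟨u, huc⟩ : {x // C x = c}) = ⟨v, hv⟩ :=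
        Fintype.card_le_one_iff.mp hcard1 _ _
      exact congrArg Subtype.val h1
    exact huv ▸ hu
  · -- all color classes big → intersection empty
    intro hBig
    rintro ⟨v, hv⟩
    set s : Finset V := Finset.univ.erase v with hs
    have hvs : ∀ u : V, u ≠ v → u ∈ (s : Set V) := by
      intro u hu; simp [hs, hu]
    set GI := G.induce (s : Set V) with hGI
    set k := GI.cliqueNum with hk
    have hkle : k ≤ G.cliqueNum := aux_cliqueNum_le (SimpleGraph.Embedding.induce (s : Set V))
    have hkne : k ≠ G.cliqueNum := by
      intro hkeq
      obtain ⟨t', ht'⟩ := GI.exists_isNClique_cliqueNum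
      have hmap := aux_isNClique_map (SimpleGraph.Embedding.induce (G := G) (s : Set V)) ht'
      rw [← hk, hkeq] at hmap
      have hvmem := hv _ hmap
      rw [Finset.mem_map] at hvmem
      obtain ⟨⟨x, hx⟩, _, hxv⟩ := hvmem
      have hx' : x ∈ s := hx
      exact (Finset.ne_of_mem_erase hx') hxv
    have hk1 : k + 1 ≤ G.cliqueNum := Nat.succ_le_of_lt (lt_of_le_of_ne hkle hkne)
    have hcol : GI.Colorable k := chromaticNumber_le_iff_colorable.mp (h s).symm.le
    let C' := hcol.some
    let C : G.Coloring (Fin (k + 1)) := Coloring.mk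
      (fun u => if hu : u = v then Fin.last k else (C' ⟨u, hvs u hu⟩).castSucc)
      (by
        intro a b hab
        split_ifs with h1 h2 h2
        · exact absurd (h1 ▸ h2 ▸ hab) (G.irrefl)
        · exact fun e => (Fin.castSucc_lt_last _).ne e.symm
        · exact fun e => (Fin.castSucc_lt_last _).ne e
        · intro e
          have hadj : GI.Adj ⟨a, hvs a h1⟩ ⟨b, hvs b h2⟩ := hab
          exact (C'.valid hadj) (Fin.castSucc_injective _ e))
    have hχle : G.chromaticNumber ≤ ((k + 1 : ℕ) : ℕ∞) := Colorable.chromaticNumber_le ⟨C⟩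
    have hχge : ((k + 1 : ℕ) : ℕ∞) ≤ G.chromaticNumber := hωχ ▸ Nat.cast_le.mpr hk1
    have hn : ((k + 1 : ℕ) : ℕ∞) = G.chromaticNumber := le_antisymm hχge hχle
    have hCv : C v = Fin.last k := dif_pos rfl
    have hbig := hBig (k + 1) C hn (Fin.last k) ⟨v, hCv⟩
    have hone : ∀ u : V, C u = Fin.last k → u = v := by
      intro u hu
      by_contra hne'
      have : C u = (C' ⟨u, hvs u hne'⟩).castSucc := dif_neg hne'
      rw [this] at hu
      exact (Fin.castSucc_lt_last _).ne hu
    have hcard : Fintype.card {u // C u = Fin.last k} ≤ 1 :=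
      Fintype.card_le_one_iff.mpr
        (fun a b => Subtype.ext ((hone _ a.2).trans (hone _ b.2).symm))
    omega
end
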